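/- arXiv:1805.12193 — 16 statements merged into one kernel-verified Lean document; each statement's English description precedes it below -/
import Mathlib

section
/- Let ≼ be a transitive relation on a set W and let φ : W → ℝ ∪ {±∞} be ≼-increasing. Define w₁ ≼_φ w₂ iff [w₁ = w₂, or (w₁ ≼ w₂ and φ(w₁) < φ(w₂))]. Then: (i) ≼_φ is a partial order (reflexive, transitive, antisymmetric) on W and φ is strictly ≼_φ-increasing; moreover ≼_φ equals ≼ ∪ Δ_W (the relation ≼ together with the diagonal) whenever φ is strictly ≼-increasing; (ii) if w̄ is a minimal element of W with respect to ≼_φ, then for every w' ∈ W with w' ≼ w̄ one has φ(w') = φ(w̄); (iii) if every ≼-decreasing sequence in W has a lower bound with respect to ≼, then every ≼_φ-decreasing sequence in W has a lower bound with respect to ≼_φ. -/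
/-- Lemma on the order `≼_φ` induced by a transitive relation `≼` and a
`≼`-increasing function `φ : W → ℝ ∪ {±∞}`. -/
theorem statement1 {W : Type*} (r : W → W → Prop) (htrans : Transitive r)
    (φ : W → EReal) (hmono : ∀ a b, r a b → φ a ≤ φ b)
    (rφ : W → W → Prop)
    (hrφ : ∀ a b, rφ a b ↔ (a = b ∨ (r a b ∧ φ a < φ b))) :
    -- (i) ≼_φ is a partial order and φ is strictly ≼_φ-increasing;
    -- moreover ≼_φ = ≼ ∪ Δ_W when φ is strictly ≼-increasing
    ((∀ a, rφ a a) ∧ Transitive rφ ∧ AntiSymmetric rφ ∧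
      (∀ a b, rφ a b → a ≠ b → φ a < φ b) ∧
      ((∀ a b, r a b → a ≠ b → φ a < φ b) → ∀ a b, rφ a b ↔ (r a b ∨ a = b)))
    ∧
    -- (ii) if wbar is minimal wrt ≼_φ then any w' ≼ wbar has the same φ-value
    (∀ wbar : W, (∀ w, rφ w wbar → w = wbar) → ∀ w', r w' wbar → φ w' = φ wbar)
    ∧
    -- (iii) condition (Ab) passes from ≼ to ≼_φ
    ((∀ w : ℕ → W, (∀ n, r (w (n + 1)) (w n)) → ∃ v, ∀ n, r v (w n)) →
      (∀ w : ℕ → W, (∀ n, rφ (w (n + 1)) (w n)) → ∃ v, ∀ n, rφ v (w n))) := by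
  have hre : ∀ a, rφ a a := fun a => (hrφ a a).2 (Or.inl rfl)
  have htr : Transitive rφ := by
    intro a b c hab hbc
    rcases (hrφ a b).1 hab with rfl | ⟨h1, h2⟩
    · exact hbc
    rcases (hrφ b c).1 hbc with rfl | ⟨h3, h4⟩
    · exact hab
    · exact (hrφ a c).2 (Or.inr ⟨htrans h1 h3, h2.trans h4⟩)
  have hstrict : ∀ a b, rφ a b → a ≠ b → φ a < φ b := by
    intro a b hab hne
    rcases (hrφ a b).1 hab with rfl | ⟨_, h⟩
    · exact absurd rfl hne
    · exact h
  have hanti : AntiSymmetric rφ := by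
    intro a b hab hba
    by_contra hne
    exact absurd ((hstrict a b hab hne).trans (hstrict b a hba (Ne.symm hne)))
      (lt_irrefl _)
  have hmonoφ : ∀ a b, rφ a b → φ a ≤ φ b := by
    intro a b hab
    rcases (hrφ a b).1 hab with rfl | ⟨_, h⟩
    · exact le_refl _
    · exact h.le
  have hreq : ∀ a b, rφ a b → a = b ∨ r a b := by
    intro a b hab
    rcases (hrφ a b).1 hab with rfl | ⟨h, _⟩
    · exact Or.inl rfl
    · exact Or.inr h
  refine ⟨⟨hre, htr, hanti, hstrict, ?_⟩, ?_, ?_⟩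
  · -- diagonal characterization
    intro hsmono a b
    constructor
    · intro hab
      rcases hreq a b hab with rfl | h
      · exact Or.inr rfl
      · exact Or.inl h
    · rintro (h | rfl)
      · by_cases hne : a = b
        · exact hne ▸ hre a
        · exact (hrφ a b).2 (Or.inr ⟨h, hsmono a b h hne⟩)
      · exact hre a
  · -- (ii)
    intro wbar hmin w' hw'
    by_contra hne
    have hlt : φ w' < φ wbar := lt_of_le_of_ne (hmono _ _ hw') hne
    have : w' = wbar := hmin w' ((hrφ _ _).2 (Or.inr ⟨hw', hlt⟩))
    exact hne (by rw [this])
  · -- (iii)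
    intro hAb w hw
    -- chains in rφ along the sequence
    have hchain : ∀ m n, m ≤ n → rφ (w n) (w m) := by
      intro m n hmn
      obtain ⟨k, rfl⟩ := Nat.exists_eq_add_of_le hmn
      induction k with
      | zero => exact hre _
      | succ k ih => exact htr (hw (m + k)) (ih (Nat.le_add_right _ _))
    -- reflexive-or-r chains in r along the sequence
    have hchr : ∀ m n, m ≤ n → w n = w m ∨ r (w n) (w m) := by
      intro m n hmn
      rcases hreq _ _ (hchain m n hmn) with h | h
      · exact Or.inl h
      · exact Or.inr h
    by_cases hc : ∃ N, ∀ n, N ≤ n → w (n + 1) = w n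
    · -- eventually constant
      obtain ⟨N, hN⟩ := hc
      refine ⟨w N, fun n => ?_⟩
      rcases le_or_gt n N with h | h
      · exact hchain n N h
      · have hconst : ∀ k, w (N + k) = w N := by
          intro k
          induction k with
          | zero => rfl
          | succ k ih => rw [← ih]; exact hN (N + k) (Nat.le_add_right _ _)
        obtain ⟨k, rfl⟩ := Nat.exists_eq_add_of_le h.le
        exact (hrφ _ _).2 (Or.inl (hconst k).symm)
    · -- infinitely many strict steps
      push_neg at hc
      have hinf : ∀ N, ∃ n, N ≤ n ∧ w (n + 1) ≠ w n := hc
      let f : ℕ → ℕ := fun i =>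
        Nat.rec (hinf 0).choose (fun _ prev => (hinf (prev + 1)).choose) i
      have hf0 : f 0 = (hinf 0).choose := rfl
      have hfs : ∀ i, f (i + 1) = (hinf (f i + 1)).choose := fun i => rfl
      have hstep : ∀ i, w (f i + 1) ≠ w (f i) := by
        intro i
        cases i with
        | zero => exact (hinf 0).choose_spec.2
        | succ i => exact (hinf (f i + 1)).choose_spec.2
      have hmonof : ∀ i, f i + 1 ≤ f (i + 1) := by
        intro i
        exact (hinf (f i + 1)).choose_spec.1
      -- strict steps give r plus strict φ-decrease
      have hstepr : ∀ i, r (w (f i + 1)) (w (f i)) ∧ φ (w (f i + 1)) < φ (w (f i)) := by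
        intro i
        rcases (hrφ _ _).1 (hw (f i)) with h | h
        · exact absurd h (hstep i)
        · exact h
      set u : ℕ → W := fun i => w (f i + 1) with hu_def
      have hu : ∀ i, r (u (i + 1)) (u i) := by
        intro i
        have h1 : r (w (f (i + 1) + 1)) (w (f (i + 1))) := (hstepr (i + 1)).1
        rcases hchr (f i + 1) (f (i + 1)) (hmonof i) with h2 | h2
        · simpa [hu_def, h2] using h1
        · exact htrans h1 h2
      obtain ⟨v, hv⟩ := hAb u hu
      refine ⟨v, fun m => ?_⟩
      have hfge : ∀ i, i ≤ f i := by
        intro i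
        induction i with
        | zero => exact Nat.zero_le _
        | succ i ih => exact le_trans (Nat.succ_le_succ ih) (hmonof i)
      -- r v (w m)
      have hrv : r v (w m) := by
        have h1 : r v (w (f m + 1)) := hv m
        rcases hchr m (f m + 1) (le_trans (hfge m) (Nat.le_succ _)) with h2 | h2
        · rwa [h2] at h1
        · exact htrans h1 h2
      -- φ v < φ (w m)
      have hφv : φ v < φ (w m) := by
        have h1 : φ v ≤ φ (u (m + 1)) := hmono _ _ (hv (m + 1))
        have h2 : φ (u (m + 1)) < φ (w (f (m + 1))) := (hstepr (m + 1)).2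
        have h3 : φ (w (f (m + 1))) ≤ φ (w m) :=
          hmonoφ _ _ (hchain m (f (m + 1)) (le_trans (Nat.le_succ m) (hfge (m + 1))))
        exact lt_of_le_of_lt h1 (lt_of_lt_of_le h2 h3)
      exact (hrφ _ _).2 (Or.inr ⟨hrv, hφv⟩)
end

section
/- (Brezis–Browder principle.) Let ≼ be a transitive relation on a nonempty set W such that every ≼-decreasing sequence in W has a lower bound, and let φ : W → ℝ be a lower bounded ≼-increasing function. Then: (i) for every w ∈ W with S_≼(w) ≠ ∅ there exists w̄ ∈ S_≼(w) such that φ(w') = φ(w̄) for all w' ∈ S_≼(w̄); (ii) if moreover φ is strictly ≼-increasing, then ≼ is antisymmetric and for every w ∈ W with S_≼(w) ≠ ∅ there exists w̄ ∈ S_≼(w) such that S_≼(w̄) ⊆ {w̄}. -/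
/-- The Brezis–Browder principle. `S_≼(w) = {w' | r w' w}`; membership
`w' ∈ S_≼(w)` is written `r w' w`. -/
theorem statement2 {W : Type*} [Nonempty W] (r : W → W → Prop) (htrans : Transitive r)
    (hAb : ∀ w : ℕ → W, (∀ n, r (w (n + 1)) (w n)) → ∃ v, ∀ n, r v (w n))
    (φ : W → ℝ) (hbdd : ∃ c : ℝ, ∀ w, c ≤ φ w)
    (hmono : ∀ a b, r a b → φ a ≤ φ b) :
    -- (i)
    (∀ w : W, (∃ w', r w' w) →
      ∃ wbar, r wbar w ∧ ∀ w', r w' wbar → φ w' = φ wbar)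
    ∧
    -- (ii)
    ((∀ a b, r a b → a ≠ b → φ a < φ b) →
      AntiSymmetric r ∧
        ∀ w : W, (∃ w', r w' w) →
          ∃ wbar, r wbar w ∧ ∀ w', r w' wbar → w' = wbar) := by
  classical
  obtain ⟨c, hc⟩ := hbdd
  set r' : W → W → Prop := fun a b => r a b ∨ a = b with hr'def
  have htrans' : Transitive r' := by
    rintro a b d (h1 | rfl) (h2 | rfl)
    · exact Or.inl (htrans h1 h2)
    · exact Or.inl h1
    · exact Or.inl h2
    · exact Or.inr rfl
  have hmono' : ∀ a b, r' a b → φ a ≤ φ b := by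
    rintro a b (h | rfl)
    · exact hmono _ _ h
    · exact le_refl _
  -- chain lemma for r'-decreasing sequences
  have hchain : ∀ (w : ℕ → W), (∀ n, r' (w (n + 1)) (w n)) →
      ∀ m n, m ≤ n → r' (w n) (w m) := by
    intro w hw m n hmn
    induction n with
    | zero => rw [Nat.le_zero.mp hmn]; exact Or.inr rfl
    | succ n ih =>
      rcases Nat.lt_or_ge m (n + 1) with h | h
      · exact htrans' (hw n) (ih (Nat.lt_succ_iff.mp h))
      · rw [le_antisymm hmn h]; exact Or.inr rfl
  -- r'-decreasing sequences have r'-lower bounds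
  have hAb' : ∀ w : ℕ → W, (∀ n, r' (w (n + 1)) (w n)) → ∃ v, ∀ n, r' v (w n) := by
    intro w hw
    by_cases H : ∀ N, ∃ n, N ≤ n ∧ w (n + 1) ≠ w n
    · choose f hf1 hf2 using H
      set k : ℕ → ℕ := fun j => Nat.rec (f 0) (fun _ kj => f (kj + 1)) j with hk
      have hk0 : k 0 = f 0 := rfl
      have hksucc : ∀ j, k (j + 1) = f (k j + 1) := fun j => rfl
      have hstep : ∀ j, r (w (k j + 1)) (w (k j)) := by
        intro j
        rcases hw (k j) with h | h
        · exact h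
        · exfalso
          cases j with
          | zero => exact hf2 0 (hk0 ▸ h)
          | succ i => exact hf2 (k i + 1) ((hksucc i) ▸ h)
      have hkmono : ∀ j, k j + 1 ≤ k (j + 1) := by
        intro j; rw [hksucc j]; exact hf1 (k j + 1)
      have hkge : ∀ j, j ≤ k j := by
        intro j
        induction j with
        | zero => exact Nat.zero_le _
        | succ i ih => exact le_trans (Nat.succ_le_succ ih) (hkmono i)
      have hdec : ∀ j, r (w (k (j + 1))) (w (k j)) := by
        intro j
        rcases hchain w hw (k j + 1) (k (j + 1)) (hkmono j) with h | h
        · exact htrans h (hstep j)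
        · rw [h]; exact hstep j
      obtain ⟨v, hv⟩ := hAb (fun j => w (k j)) hdec
      refine ⟨v, fun n => ?_⟩
      rcases hchain w hw n (k n) (hkge n) with h | h
      · exact Or.inl (htrans (hv n) h)
      · exact Or.inl (h ▸ hv n)
    · push_neg at H
      obtain ⟨N, hN⟩ := H
      have hconst : ∀ n, N ≤ n → w n = w N := by
        intro n hn
        induction n with
        | zero => rw [Nat.le_zero.mp hn]
        | succ i ih =>
          rcases Nat.lt_or_ge N (i + 1) with h | h
          · have : N ≤ i := Nat.lt_succ_iff.mp h
            rw [hN i this, ih this]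
          · rw [le_antisymm hn h]
      refine ⟨w N, fun n => ?_⟩
      rcases le_or_gt N n with h | h
      · rw [hconst n h]; exact Or.inr rfl
      · exact hchain w hw n N h.le
  -- the infimum function
  set m : W → ℝ := fun u => sInf (φ '' {x | r' x u}) with hm
  have hne : ∀ u : W, (φ '' {x | r' x u}).Nonempty :=
    fun u => ⟨φ u, u, Or.inr rfl, rfl⟩
  have hbdd' : ∀ u : W, BddBelow (φ '' {x | r' x u}) := by
    rintro u
    exact ⟨c, by rintro y ⟨x, -, rfl⟩; exact hc x⟩
  have hmle : ∀ u x, r' x u → m u ≤ φ x :=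
    fun u x hx => csInf_le (hbdd' u) ⟨x, hx, rfl⟩
  -- part (i)
  have part1 : ∀ w : W, (∃ w', r w' w) →
      ∃ wbar, r wbar w ∧ ∀ w', r w' wbar → φ w' = φ wbar := by
    intro w hw
    obtain ⟨w0, hw0⟩ := hw
    have pick : ∀ (u : W) (n : ℕ), ∃ x, r' x u ∧ φ x < m u + 1 / (n + 1) := by
      intro u n
      have hpos : (0 : ℝ) < 1 / (n + 1) := by positivity
      obtain ⟨y, ⟨x, hx, rfl⟩, hy⟩ :=
        exists_lt_of_csInf_lt (hne u) (lt_add_of_pos_right (m u) hpos)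
      exact ⟨x, hx, hy⟩
    choose g hg1 hg2 using pick
    set seq : ℕ → W := fun n => Nat.rec w0 (fun n u => g u n) n with hseq
    have hseq0 : seq 0 = w0 := rfl
    have hseqsucc : ∀ n, seq (n + 1) = g (seq n) n := fun n => rfl
    have hdec : ∀ n, r' (seq (n + 1)) (seq n) := fun n => hg1 (seq n) n
    obtain ⟨v, hv⟩ := hAb' seq hdec
    have hrvw : r v w := by
      rcases hv 0 with h | h
      · exact htrans h hw0
      · rw [hseq0] at h; rw [h]; exact hw0
    refine ⟨v, hrvw, fun w' hw' => ?_⟩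
    have h1 : φ w' ≤ φ v := hmono _ _ hw'
    have h2 : φ v ≤ φ w' := by
      apply le_of_forall_pos_le_add
      intro ε hε
      obtain ⟨n, hn⟩ := exists_nat_one_div_lt hε
      have hw'n : r' w' (seq n) := htrans' (Or.inl hw') (hv n)
      have ha : m (seq n) ≤ φ w' := hmle _ _ hw'n
      have hb : φ v ≤ φ (seq (n + 1)) := hmono' _ _ (hv (n + 1))
      have hcc : φ (seq (n + 1)) < m (seq n) + 1 / (n + 1) := hg2 (seq n) n
      have : (1 : ℝ) / (n + 1) < ε := hn
      linarith
    linarith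
  refine ⟨part1, fun hstrict => ⟨?_, ?_⟩⟩
  · intro a b hab hba
    by_contra hne'
    have h1 := hstrict a b hab hne'
    have h2 := hstrict b a hba (Ne.symm hne')
    linarith
  · intro w hw
    obtain ⟨wbar, h1, h2⟩ := part1 w hw
    refine ⟨wbar, h1, fun w' hw' => ?_⟩
    by_contra hne'
    exact absurd (h2 w' hw') (ne_of_lt (hstrict _ _ hw' hne'))
end

section
/- (Extended Brezis–Browder principle.) Let ≼ be a transitive relation on a nonempty set W such that every ≼-decreasing sequence in W has a lower bound, and let φ : W → ℝ ∪ {±∞} be a ≼-increasing function. Then: (i) for every w ∈ W with S_≼(w) ≠ ∅ there exists w̄ ∈ S_≼(w) such that φ(w') = φ(w̄) for all w' ∈ S_≼(w̄); (ii) if moreover φ is strictly ≼-increasing, then ≼ is antisymmetric and for every w ∈ W with S_≼(w) ≠ ∅ there exists w̄ ∈ S_≼(w) such that S_≼(w̄) ⊆ {w̄}. -/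
noncomputable def myf : EReal → ℝ := fun x =>
  if x = ⊥ then -2 else if x = ⊤ then 2 else Real.arctan x.toReal

lemma myf_strictMono : StrictMono myf := by
  intro a b hab
  induction a using EReal.rec <;> induction b using EReal.rec <;>
    simp_all [myf]
  · linarith [Real.neg_pi_div_two_lt_arctan ‹ℝ›, Real.pi_lt_d2]
  · linarith [Real.arctan_lt_pi_div_two ‹ℝ›, Real.pi_lt_d2]

lemma myf_lb (x : EReal) : -2 ≤ myf x := by
  induction x using EReal.rec <;> simp [myf]
  · linarith [Real.neg_pi_div_two_lt_arctan ‹ℝ›, Real.pi_lt_d2]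

/-- Core form of (i). -/
theorem bb_core {W : Type*} (r : W → W → Prop) (htrans : Transitive r)
    (hAb : ∀ w : ℕ → W, (∀ n, r (w (n + 1)) (w n)) → ∃ v, ∀ n, r v (w n))
    (φ : W → EReal) (hmono : ∀ a b, r a b → φ a ≤ φ b) :
    ∀ w : W, (∃ w', r w' w) →
      ∃ wbar, r wbar w ∧ ∀ w', r w' wbar → φ w' = φ wbar := by
  intro w hw
  by_contra hcon
  push_neg at hcon
  set ψ : W → ℝ := fun x => myf (φ x) with hψ
  have hψmono : ∀ a b, r a b → ψ a ≤ ψ b := fun a b h =>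
    myf_strictMono.monotone (hmono a b h)
  -- negation: every element below w has a strictly φ-different element below it
  have H : ∀ u, r u w → ∃ x, r x u ∧ φ x ≠ φ u := by
    intro u hu
    obtain ⟨x, hx1, hx2⟩ := hcon u hu
    exact ⟨x, hx1, hx2⟩
  set S : W → Set ℝ := fun u => ψ '' {x | r x u} with hS
  set m : W → ℝ := fun u => sInf (S u) with hm
  have hbdd : ∀ u, BddBelow (S u) := by
    rintro u
    exact ⟨-2, by rintro y ⟨x, -, rfl⟩; exact myf_lb _⟩
  have hne : ∀ u, r u w → (S u).Nonempty := by
    intro u hu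
    obtain ⟨x, hx, -⟩ := H u hu
    exact ⟨ψ x, x, hx, rfl⟩
  have key : ∀ u, r u w → ∀ n : ℕ, ∃ x, (r x u ∧ r x w) ∧ ψ x < m u + (1/2)^n := by
    intro u hu n
    have h1 : m u < m u + (1/2)^n := by
      have : (0:ℝ) < (1/2)^n := by positivity
      linarith
    obtain ⟨y, ⟨x, hx, rfl⟩, hy⟩ := exists_lt_of_csInf_lt (hne u hu) h1
    exact ⟨x, ⟨hx, htrans hx hu⟩, hy⟩
  obtain ⟨w0, hw0⟩ := hw
  -- recursive sequence
  let g : ℕ → {u : W // r u w} := fun n =>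
    Nat.rec ⟨w0, hw0⟩
      (fun n p => ⟨(key p.1 p.2 n).choose, ((key p.1 p.2 n).choose_spec).1.2⟩) n
  have hgdec : ∀ n, r (g (n+1)).1 (g n).1 := fun n =>
    ((key (g n).1 (g n).2 n).choose_spec).1.1
  have hgval : ∀ n, ψ (g (n+1)).1 < m (g n).1 + (1/2)^n := fun n =>
    ((key (g n).1 (g n).2 n).choose_spec).2
  obtain ⟨v, hv⟩ := hAb (fun n => (g n).1) hgdec
  have hvw : r v w := htrans (hv 0) (g 0).2
  obtain ⟨w', hw'v, hw'ne⟩ := H v hvw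
  -- ψ w' = ψ v
  have h1 : ψ w' ≤ ψ v := hψmono _ _ hw'v
  have h2 : ψ v ≤ ψ w' := by
    have hkey : ∀ n : ℕ, ψ v ≤ ψ w' + (1/2)^n := by
      intro n
      have hmem : ψ w' ∈ S (g n).1 := ⟨w', htrans hw'v (hv n), rfl⟩
      have hinf : m (g n).1 ≤ ψ w' := csInf_le (hbdd _) hmem
      have hvle : ψ v ≤ ψ (g (n+1)).1 := hψmono _ _ (hv (n+1))
      linarith [hgval n]
    by_contra hlt
    push_neg at hlt
    obtain ⟨n, hn⟩ := exists_pow_lt_of_lt_one (by linarith : (0:ℝ) < ψ v - ψ w')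
      (by norm_num : (1:ℝ)/2 < 1)
    linarith [hkey n]
  have : φ w' = φ v := myf_strictMono.injective (le_antisymm h1 h2)
  exact hw'ne this

/-- The extended Brezis–Browder principle, for `φ : W → ℝ ∪ {±∞}`. -/
theorem statement3 {W : Type*} [Nonempty W] (r : W → W → Prop) (htrans : Transitive r)
    (hAb : ∀ w : ℕ → W, (∀ n, r (w (n + 1)) (w n)) → ∃ v, ∀ n, r v (w n))
    (φ : W → EReal) (hmono : ∀ a b, r a b → φ a ≤ φ b) :
    -- (i)
    (∀ w : W, (∃ w', r w' w) →
      ∃ wbar, r wbar w ∧ ∀ w', r w' wbar → φ w' = φ wbar)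
    ∧
    -- (ii)
    ((∀ a b, r a b → a ≠ b → φ a < φ b) →
      AntiSymmetric r ∧
        ∀ w : W, (∃ w', r w' w) →
          ∃ wbar, r wbar w ∧ ∀ w', r w' wbar → w' = wbar) := by
  have hi := bb_core r htrans hAb φ hmono
  refine ⟨hi, fun hstrict => ⟨?_, ?_⟩⟩
  · intro a b hab hba
    by_contra hne
    exact absurd (hstrict a b hab hne) (not_lt.2 (le_of_lt (hstrict b a hba (Ne.symm hne))))
  · intro w hw
    obtain ⟨wbar, h1, h2⟩ := hi w hw
    refine ⟨wbar, h1, fun w' hw' => ?_⟩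
    by_contra hne
    exact absurd (h2 w' hw') (ne_of_lt (hstrict w' wbar hw' hne))
end

section
/- Let ≼ be a transitive relation on a nonempty set W and let φ : W → ℝ be a lower bounded ≼-increasing function. Assume condition (AQ): every strictly ≼-decreasing sequence (w_n)_{n≥1} ⊆ W such that (φ(w_n))_{n≥1} is strictly decreasing and φ(w_{n+1}) − inf{φ(v) | v ≼ w_n} → 0 has a lower bound with respect to ≼. Then: (i) for every w ∈ W with S_≼(w) ≠ ∅ there exists w̄ ∈ S_≼(w) such that φ(w') = φ(w̄) for all w' ∈ S_≼(w̄); (ii) if moreover φ is strictly ≼-increasing, then for every w ∈ W with S_≼(w) ≠ ∅ there exists w̄ ∈ S_≼(w) such that S_≼(w̄) ⊆ {w̄}. -/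
/-- Brezis–Browder principle under the weaker condition (AQ). -/
theorem statement4 {W : Type*} [Nonempty W] (r : W → W → Prop) (htrans : Transitive r)
    (φ : W → ℝ) (hbdd : ∃ c : ℝ, ∀ w, c ≤ φ w)
    (hmono : ∀ a b, r a b → φ a ≤ φ b)
    (hAQ : ∀ w : ℕ → W, (∀ n, r (w (n + 1)) (w n) ∧ w (n + 1) ≠ w n) →
      (∀ n, φ (w (n + 1)) < φ (w n)) →
      Filter.Tendsto (fun n => φ (w (n + 1)) - sInf (φ '' {v | r v (w n)}))
        Filter.atTop (nhds 0) →
      ∃ v, ∀ n, r v (w n)) :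
    -- (i)
    (∀ w : W, (∃ w', r w' w) →
      ∃ wbar, r wbar w ∧ ∀ w', r w' wbar → φ w' = φ wbar)
    ∧
    -- (ii)
    ((∀ a b, r a b → a ≠ b → φ a < φ b) →
      ∀ w : W, (∃ w', r w' w) →
        ∃ wbar, r wbar w ∧ ∀ w', r w' wbar → w' = wbar) := by
  obtain ⟨c, hc⟩ := hbdd
  have hbb : ∀ u : W, BddBelow (φ '' {v | r v u}) := by
    intro u
    exact ⟨c, fun x ⟨v, _, hv⟩ => hv ▸ hc v⟩
  set m : W → ℝ := fun u => sInf (φ '' {v | r v u}) with hm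
  have part1 : ∀ w : W, (∃ w', r w' w) →
      ∃ wbar, r wbar w ∧ ∀ w', r w' wbar → φ w' = φ wbar := by
    intro w hw
    by_contra hcon
    push_neg at hcon
    -- hcon : ∀ wbar, r wbar w → ∃ w', r w' wbar ∧ φ w' ≠ φ wbar
    have hstep : ∀ u : W, r u w → ∀ ε : ℝ, 0 < ε →
        ∃ v, r v u ∧ φ v < φ u ∧ φ v < m u + ε := by
      intro u hu ε hε
      obtain ⟨w', hw', hne⟩ := hcon u hu
      have hlt : φ w' < φ u := lt_of_le_of_ne (hmono _ _ hw') hne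
      have hne2 : (φ '' {v | r v u}).Nonempty := ⟨φ w', w', hw', rfl⟩
      have hmu : m u < min (φ u) (m u + ε) := by
        apply lt_min
        · exact lt_of_le_of_lt (csInf_le (hbb u) ⟨w', hw', rfl⟩) hlt
        · linarith
      obtain ⟨x, ⟨v, hv, rfl⟩, hx⟩ := exists_lt_of_csInf_lt hne2 hmu
      exact ⟨v, hv, lt_of_lt_of_le hx (min_le_left _ _),
        lt_of_lt_of_le hx (min_le_right _ _)⟩
    choose! F hF1 hF2 hF3 using hstep
    obtain ⟨w0, hw0⟩ := hw
    set seq : ℕ → W := fun n => Nat.rec w0 (fun k u => F u (1 / (k + 1))) n with hseq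
    have hseq0 : seq 0 = w0 := rfl
    have hseqS : ∀ n, seq (n + 1) = F (seq n) (1 / (n + 1)) := fun n => rfl
    have hpos : ∀ n : ℕ, (0 : ℝ) < 1 / (n + 1) := by
      intro n
      positivity
    have hrw : ∀ n, r (seq n) w := by
      intro n
      induction n with
      | zero => exact hw0
      | succ k ih =>
        rw [hseqS]
        exact htrans (hF1 (seq k) ih (1 / (k + 1)) (hpos k)) ih
    have hdec : ∀ n, r (seq (n + 1)) (seq n) :=
      fun n => hseqS n ▸ hF1 (seq n) (hrw n) (1 / (n + 1)) (hpos n)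
    have hφdec : ∀ n, φ (seq (n + 1)) < φ (seq n) :=
      fun n => hseqS n ▸ hF2 (seq n) (hrw n) (1 / (n + 1)) (hpos n)
    have hinf : ∀ n, φ (seq (n + 1)) < m (seq n) + 1 / (n + 1) :=
      fun n => hseqS n ▸ hF3 (seq n) (hrw n) (1 / (n + 1)) (hpos n)
    have hmle : ∀ n, m (seq n) ≤ φ (seq (n + 1)) :=
      fun n => csInf_le (hbb (seq n)) ⟨seq (n + 1), hdec n, rfl⟩
    have htend : Filter.Tendsto (fun n => φ (seq (n + 1)) - m (seq n))
        Filter.atTop (nhds 0) := by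
      have h1 : Filter.Tendsto (fun n : ℕ => 1 / ((n : ℝ) + 1)) Filter.atTop (nhds 0) :=
        tendsto_one_div_add_atTop_nhds_zero_nat
      refine squeeze_zero (fun n => by linarith [hmle n]) (fun n => ?_) h1
      linarith [hinf n]
    obtain ⟨v, hv⟩ := hAQ seq
      (fun n => ⟨hdec n, fun h => absurd (congrArg φ h) (ne_of_lt (hφdec n))⟩)
      hφdec htend
    obtain ⟨w', hw', hne⟩ := hcon v (htrans (hv 0) (hrw 0))
    have hlt : φ w' < φ v := lt_of_le_of_ne (hmono _ _ hw') hne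
    obtain ⟨n, hn⟩ := exists_nat_one_div_lt (show (0:ℝ) < φ v - φ w' by linarith)
    have h1 : m (seq n) ≤ φ w' := csInf_le (hbb (seq n)) ⟨w', htrans hw' (hv n), rfl⟩
    have h2 : φ v ≤ φ (seq (n + 1)) := hmono _ _ (hv (n + 1))
    have := hinf n
    linarith
  refine ⟨part1, fun hstrict w hw => ?_⟩
  obtain ⟨wbar, h1, h2⟩ := part1 w hw
  refine ⟨wbar, h1, fun w' hw' => ?_⟩
  by_contra hne
  exact absurd (h2 w' hw') (ne_of_lt (hstrict _ _ hw' hne))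
end

section
/- Let (X,d) be a metric space, Z a nonempty set, and 𝒜 ⊆ X × Z a nonempty set equipped with a preorder ≼ (a reflexive and transitive relation on 𝒜) satisfying condition (C0): for every ≼-decreasing sequence ((x_n,z_n))_{n≥1} ⊆ 𝒜, the sequence (x_n) is Cauchy in (X,d) and there exists (x,z) ∈ 𝒜 with (x,z) ≼ (x_n,z_n) for all n ≥ 1. Then for every (x,z) ∈ 𝒜 there exists (x̄,z̄) ∈ 𝒜 such that (x̄,z̄) ≼ (x,z) and every (x',z') ∈ 𝒜 with (x',z') ≼ (x̄,z̄) satisfies x' = x̄. -/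
/-- Minimal element theorem on a product `X × Z` under condition (C0). -/
theorem statement5 {X Z : Type*} [MetricSpace X] [Nonempty Z]
    (A : Set (X × Z)) (hA : A.Nonempty)
    (r : X × Z → X × Z → Prop)
    (hrefl : ∀ p ∈ A, r p p)
    (htrans : ∀ p ∈ A, ∀ q ∈ A, ∀ s ∈ A, r p q → r q s → r p s)
    (hC0 : ∀ u : ℕ → X × Z, (∀ n, u n ∈ A) → (∀ n, r (u (n + 1)) (u n)) →
      CauchySeq (fun n => (u n).1) ∧ ∃ p ∈ A, ∀ n, r p (u n)) :
    ∀ p ∈ A, ∃ q ∈ A, r q p ∧ ∀ s ∈ A, r s q → s.1 = q.1 := by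
  classical
  -- the "radius" functional
  set D : X × Z → ℝ := fun p =>
    sSup ((fun q : X × Z => min (dist q.1 p.1) 1) '' {q | q ∈ A ∧ r q p}) with hD
  have hbdd : ∀ p : X × Z, BddAbove ((fun q : X × Z => min (dist q.1 p.1) 1) ''
      {q | q ∈ A ∧ r q p}) := by
    intro p
    refine ⟨1, ?_⟩
    rintro t ⟨q, _, rfl⟩
    exact min_le_right _ _
  have hDmem : ∀ p, ∀ q, q ∈ A → r q p → min (dist q.1 p.1) 1 ≤ D p := by
    intro p q hq hrq
    exact le_csSup (hbdd p) ⟨q, ⟨hq, hrq⟩, rfl⟩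
  have hstep : ∀ p, p ∈ A → ∃ q, q ∈ A ∧ r q p ∧ D p ≤ 2 * min (dist q.1 p.1) 1 := by
    intro p hp
    by_cases h : D p ≤ 0
    · refine ⟨p, hp, hrefl p hp, ?_⟩
      have : (0:ℝ) ≤ 2 * min (dist p.1 p.1) 1 := by positivity
      linarith
    · push_neg at h
      have hne : ((fun q : X × Z => min (dist q.1 p.1) 1) '' {q | q ∈ A ∧ r q p}).Nonempty :=
        ⟨_, ⟨p, ⟨hp, hrefl p hp⟩, rfl⟩⟩
      have hlt : D p / 2 < D p := by linarith
      obtain ⟨t, ht, htlt⟩ := exists_lt_of_lt_csSup hne hlt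
      obtain ⟨q, ⟨hqA, hqr⟩, rfl⟩ := ht
      exact ⟨q, hqA, hqr, by linarith⟩
  obtain ⟨p₀, hp₀⟩ := hA
  intro p hp
  -- build the decreasing sequence
  let g : {q // q ∈ A} → {q // q ∈ A} := fun q =>
    ⟨Classical.choose (hstep q.1 q.2), (Classical.choose_spec (hstep q.1 q.2)).1⟩
  let u : ℕ → {q // q ∈ A} := fun n => g^[n] ⟨p, hp⟩
  let v : ℕ → X × Z := fun n => (u n).1
  have hiter : ∀ n, u (n + 1) = g (u n) := fun n => Function.iterate_succ_apply' g n _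
  have hv0 : v 0 = p := rfl
  have hvA : ∀ n, v n ∈ A := fun n => (u n).2
  have hvr : ∀ n, r (v (n + 1)) (v n) := by
    intro n
    have : v (n + 1) = (g (u n)).1 := congrArg Subtype.val (hiter n)
    rw [this]
    exact (Classical.choose_spec (hstep (u n).1 (u n).2)).2.1
  have hvD : ∀ n, D (v n) ≤ 2 * min (dist (v (n + 1)).1 (v n).1) 1 := by
    intro n
    have : v (n + 1) = (g (u n)).1 := congrArg Subtype.val (hiter n)
    rw [this]
    exact (Classical.choose_spec (hstep (u n).1 (u n).2)).2.2
  obtain ⟨hCauchy, qb, hqbA, hqb⟩ := hC0 v hvA hvr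
  -- r qb (v n) for all n
  refine ⟨qb, hqbA, by simpa [hv0] using hqb 0, ?_⟩
  intro s hs hsqb
  have hsv : ∀ n, r s (v n) := fun n =>
    htrans s hs qb hqbA (v n) (hvA n) hsqb (hqb n)
  apply eq_of_forall_dist_le
  intro ε hε
  have hδ : (0:ℝ) < min (ε / 4) (1 / 4) := by positivity
  obtain ⟨N, hN⟩ := Metric.cauchySeq_iff'.mp hCauchy (min (ε / 4) (1 / 4)) hδ
  have hdN : dist (v (N + 1)).1 (v N).1 < min (ε / 4) (1 / 4) := by
    simpa using hN (N + 1) (Nat.le_succ N)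
  have hDN : D (v N) < 2 * min (ε / 4) (1 / 4) := by
    have h1 := hvD N
    have h2 : min (dist (v (N + 1)).1 (v N).1) 1 ≤ dist (v (N + 1)).1 (v N).1 :=
      min_le_left _ _
    linarith
  have hDN1 : D (v N) < 1 := by
    have : (2:ℝ) * min (ε / 4) (1 / 4) ≤ 2 * (1 / 4) := by
      have := min_le_right (ε / 4) (1 / 4 : ℝ); linarith
    linarith
  have key : ∀ w : X × Z, w ∈ A → r w (v N) → dist w.1 (v N).1 ≤ 2 * min (ε / 4) (1 / 4) := by
    intro w hw hrw
    have h1 := hDmem (v N) w hw hrw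
    by_cases hd : dist w.1 (v N).1 ≤ 1
    · rw [min_eq_left hd] at h1; linarith
    · exfalso
      push_neg at hd
      rw [min_eq_right (le_of_lt hd)] at h1
      linarith
  have hs' := key s hs (hsv N)
  have hq' := key qb hqbA (hqb N)
  have htri : dist s.1 qb.1 ≤ dist s.1 (v N).1 + dist (v N).1 qb.1 := dist_triangle _ _ _
  have : dist (v N).1 qb.1 = dist qb.1 (v N).1 := dist_comm _ _
  have hmin : min (ε / 4) (1 / 4 : ℝ) ≤ ε / 4 := min_le_left _ _
  linarith
end

section
/- Let (X,d) be a metric space, Z a nonempty set, and 𝒜 ⊆ X × Z a nonempty set equipped with a preorder ≼ (reflexive and transitive relation on 𝒜) satisfying condition (C'0): for every ≼-decreasing sequence ((x_n,z_n))_{n≥1} ⊆ 𝒜 there exists (x,z) ∈ 𝒜 such that x_n → x in (X,d) and (x,z) ≼ (x_n,z_n) for all n ≥ 1. Then for every (x,z) ∈ 𝒜 there exists (x̄,z̄) ∈ 𝒜 such that (x̄,z̄) ≼ (x,z) and every (x',z') ∈ 𝒜 with (x',z') ≼ (x̄,z̄) satisfies x' = x̄. -/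
/-- Minimal element theorem on a product `X × Z` under condition (C'0). -/
theorem statement6 {X Z : Type*} [MetricSpace X] [Nonempty Z]
    (A : Set (X × Z)) (hA : A.Nonempty)
    (r : X × Z → X × Z → Prop)
    (hrefl : ∀ p ∈ A, r p p)
    (htrans : ∀ p ∈ A, ∀ q ∈ A, ∀ s ∈ A, r p q → r q s → r p s)
    (hC'0 : ∀ u : ℕ → X × Z, (∀ n, u n ∈ A) → (∀ n, r (u (n + 1)) (u n)) →
      ∃ p ∈ A, Filter.Tendsto (fun n => (u n).1) Filter.atTop (nhds p.1) ∧
        ∀ n, r p (u n)) :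
    ∀ p ∈ A, ∃ q ∈ A, r q p ∧ ∀ s ∈ A, r s q → s.1 = q.1 := by
  classical
  -- Step lemma: almost-maximal drop choice
  have step : ∀ p ∈ A, ∃ q, q ∈ A ∧ r q p ∧
      ∀ s ∈ A, r s p → min 1 (dist s.1 p.1) ≤ 2 * min 1 (dist q.1 p.1) := by
    intro p hp
    set T : Set ℝ := (fun s : X × Z => min 1 (dist s.1 p.1)) '' {s | s ∈ A ∧ r s p} with hT
    have hTne : T.Nonempty := ⟨min 1 (dist p.1 p.1), ⟨p, ⟨hp, hrefl p hp⟩, rfl⟩⟩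
    have hTbdd : BddAbove T := ⟨1, by rintro x ⟨s, _, rfl⟩; exact min_le_left _ _⟩
    set M := sSup T with hM
    by_cases hM0 : M ≤ 0
    · refine ⟨p, hp, hrefl p hp, ?_⟩
      intro s hs hsp
      have h1 : min 1 (dist s.1 p.1) ≤ M := le_csSup hTbdd ⟨s, ⟨hs, hsp⟩, rfl⟩
      have : (2 : ℝ) * min 1 (dist p.1 p.1) = 0 := by simp
      linarith
    · push_neg at hM0
      have : M / 2 < M := by linarith
      obtain ⟨a, ⟨q, ⟨hqA, hqp⟩, rfl⟩, ha⟩ := exists_lt_of_lt_csSup hTne this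
      refine ⟨q, hqA, hqp, ?_⟩
      intro s hs hsp
      have h1 : min 1 (dist s.1 p.1) ≤ M := le_csSup hTbdd ⟨s, ⟨hs, hsp⟩, rfl⟩
      linarith
  intro p hp
  -- Build the decreasing sequence
  let g : X × Z → X × Z := fun q => if h : q ∈ A then (step q h).choose else q
  let u : ℕ → X × Z := fun n => g^[n] p
  have hu0 : u 0 = p := rfl
  have husucc : ∀ n, u (n + 1) = g (u n) := fun n =>
    Function.iterate_succ_apply' g n p
  have huA : ∀ n, u n ∈ A := by
    intro n
    induction n with
    | zero => exact hp
    | succ n ih =>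
      rw [husucc n]
      simp only [g, dif_pos ih]
      exact (step (u n) ih).choose_spec.1
  have hur : ∀ n, r (u (n + 1)) (u n) := by
    intro n
    have := huA n
    rw [husucc n]
    simp only [g, dif_pos this]
    exact (step (u n) this).choose_spec.2.1
  have hukey : ∀ n, ∀ s ∈ A, r s (u n) →
      min 1 (dist s.1 (u n).1) ≤ 2 * min 1 (dist (u (n + 1)).1 (u n).1) := by
    intro n s hs hsr
    have hmem := huA n
    have h := (step (u n) hmem).choose_spec.2.2 s hs hsr
    rw [husucc n]
    simpa only [g, dif_pos hmem] using h
  obtain ⟨q, hqA, hqlim, hqr⟩ := hC'0 u huA hur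
  refine ⟨q, hqA, hqr 0, ?_⟩
  intro s hs hsq
  -- r s (u n) for all n
  have hsun : ∀ n, r s (u n) := fun n =>
    htrans s hs q hqA (u n) (huA n) hsq (hqr n)
  -- dist (u (n+1)).1 (u n).1 → 0
  have hlim2 : Filter.Tendsto (fun n => (u (n + 1)).1) Filter.atTop (nhds q.1) :=
    hqlim.comp (Filter.tendsto_add_atTop_nat 1)
  have hd0 : Filter.Tendsto (fun n => dist (u (n + 1)).1 (u n).1) Filter.atTop (nhds 0) := by
    have := hlim2.dist hqlim
    simpa using this
  have hrhs : Filter.Tendsto (fun n => 2 * min 1 (dist (u (n + 1)).1 (u n).1))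
      Filter.atTop (nhds 0) := by
    have : Filter.Tendsto (fun n => min 1 (dist (u (n + 1)).1 (u n).1))
        Filter.atTop (nhds (min 1 0)) :=
      (continuous_const.min continuous_id).continuousAt.tendsto.comp hd0
    have h2 := this.const_mul (2 : ℝ)
    simpa using h2
  have hlhs : Filter.Tendsto (fun n => min 1 (dist s.1 (u n).1))
      Filter.atTop (nhds (min 1 (dist s.1 q.1))) := by
    have hdl : Filter.Tendsto (fun n => dist s.1 (u n).1) Filter.atTop
        (nhds (dist s.1 q.1)) := tendsto_const_nhds.dist hqlim
    exact (continuous_const.min continuous_id).continuousAt.tendsto.comp hdl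
  have hle : min 1 (dist s.1 q.1) ≤ 0 :=
    le_of_tendsto_of_tendsto' hlhs hrhs (fun n => hukey n s hs (hsun n))
  have hpos : (0 : ℝ) ≤ dist s.1 q.1 := dist_nonneg
  have : dist s.1 q.1 = 0 := by
    rcases le_or_gt (dist s.1 q.1) 0 with h | h
    · linarith
    · have : (0 : ℝ) < min 1 (dist s.1 q.1) := lt_min one_pos h
      linarith
  exact dist_eq_zero.mp this
end

section
/- Let (X,d) be a metric space preordered by a reflexive transitive relation ≼ satisfying condition (A0): every ≼-decreasing sequence (x_n)_{n≥1} ⊆ X is Cauchy and there exists x ∈ X with x ≼ x_n for all n ≥ 1. Then for every x ∈ X there exists x̄ ∈ X such that x̄ ≼ x and every x' ∈ X with x' ≼ x̄ satisfies x' = x̄. -/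
/-- Minimal element theorem on a preordered metric space under condition (A0). -/
theorem statement7 {X : Type*} [MetricSpace X]
    (r : X → X → Prop) (hrefl : ∀ x, r x x) (htrans : Transitive r)
    (hA0 : ∀ x : ℕ → X, (∀ n, r (x (n + 1)) (x n)) →
      CauchySeq x ∧ ∃ v, ∀ n, r v (x n)) :
    ∀ x : X, ∃ xbar, r xbar x ∧ ∀ x', r x' xbar → x' = xbar := by
  classical
  intro x
  set S : X → Set ℝ := fun y => (fun z => min 1 (dist z y)) '' {z | r z y} with hS
  have hne : ∀ y, (S y).Nonempty := fun y => ⟨min 1 (dist y y), y, hrefl y, rfl⟩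
  have hbdd : ∀ y, BddAbove (S y) := fun y => ⟨1, by rintro _ ⟨z, hz, rfl⟩; exact min_le_left _ _⟩
  set t : X → ℝ := fun y => sSup (S y) with ht
  have hle : ∀ y z, r z y → min 1 (dist z y) ≤ t y := fun y z hz => le_csSup (hbdd y) ⟨z, hz, rfl⟩
  have ht0 : ∀ y, 0 ≤ t y := fun y => by
    have := hle y y (hrefl y); simpa [dist_self] using this
  have hex : ∀ y, ∃ z, r z y ∧ t y / 2 ≤ min 1 (dist z y) := by
    intro y
    rcases le_or_gt (t y) 0 with h | h
    · refine ⟨y, hrefl y, ?_⟩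
      simp only [dist_self, min_eq_right (zero_le_one), le_refl]
      linarith
    · have hlt : t y / 2 < t y := by linarith
      obtain ⟨w, hw, hw2⟩ := exists_lt_of_lt_csSup (hne y) hlt
      obtain ⟨z, hz, rfl⟩ := hw
      exact ⟨z, hz, le_of_lt hw2⟩
  choose nxt hnxt1 hnxt2 using hex
  set seq : ℕ → X := fun n => nxt^[n] x with hseq
  have hsucc : ∀ n, seq (n + 1) = nxt (seq n) := fun n => Function.iterate_succ_apply' _ _ _
  have hdec : ∀ n, r (seq (n + 1)) (seq n) := fun n => by rw [hsucc]; exact hnxt1 _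
  obtain ⟨hc, v, hv⟩ := hA0 seq hdec
  have hseq0 : seq 0 = x := rfl
  refine ⟨v, by rw [← hseq0]; exact hv 0, ?_⟩
  intro z hz
  have hz' : ∀ n, r z (seq n) := fun n => htrans hz (hv n)
  have htto : ∀ ε > (0 : ℝ), ∃ n, t (seq n) < ε := by
    intro ε hε
    obtain ⟨N, hN⟩ := Metric.cauchySeq_iff.mp hc (min 1 (ε / 2)) (by positivity)
    refine ⟨N, ?_⟩
    have h1 := hN (N + 1) (by omega) N (by omega)
    have h2 : t (seq N) / 2 ≤ min 1 (dist (seq (N + 1)) (seq N)) := by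
      rw [hsucc]; exact hnxt2 _
    have h3 : min 1 (dist (seq (N + 1)) (seq N)) ≤ dist (seq (N + 1)) (seq N) :=
      min_le_right _ _
    have h4 : min 1 (ε / 2) ≤ ε / 2 := min_le_right _ _
    linarith
  have small : ∀ n w, r w (seq n) → t (seq n) < 1 → dist w (seq n) ≤ t (seq n) := by
    intro n w hw hlt
    have h := hle (seq n) w hw
    rcases lt_or_ge (dist w (seq n)) 1 with hd | hd
    · rwa [min_eq_right (le_of_lt hd)] at h
    · rw [min_eq_left hd] at h; linarith
  have hdzv : dist z v ≤ 0 := by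
    by_contra hpos
    push_neg at hpos
    set δ : ℝ := min (dist z v / 2) (1 / 2) with hδ
    have hδpos : 0 < δ := lt_min (by linarith) (by norm_num)
    obtain ⟨n, hn⟩ := htto δ hδpos
    have hδ1 : δ < 1 := lt_of_le_of_lt (min_le_right _ _) (by norm_num)
    have h1 : dist z (seq n) ≤ t (seq n) := small n z (hz' n) (lt_trans hn hδ1)
    have h2 : dist v (seq n) ≤ t (seq n) := small n v (hv n) (lt_trans hn hδ1)
    have h3 : dist z v ≤ dist z (seq n) + dist (seq n) v := dist_triangle _ _ _
    rw [dist_comm (seq n) v] at h3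
    have hδle : δ ≤ dist z v / 2 := min_le_left _ _
    linarith
  exact dist_le_zero.mp hdzv
end

section
/- Let (X,d) be a metric space preordered by a reflexive transitive relation ≼ satisfying condition (A'0): for every ≼-decreasing sequence (x_n)_{n≥1} ⊆ X there exists x ∈ X such that x_n → x and x ≼ x_n for all n ≥ 1. Then for every x ∈ X there exists x̄ ∈ X such that x̄ ≼ x and every x' ∈ X with x' ≼ x̄ satisfies x' = x̄. -/
/-- Minimal element theorem on a preordered metric space under condition (A'0)
(Liu–Ng). -/
theorem statement8 {X : Type*} [MetricSpace X]
    (r : X → X → Prop) (hrefl : ∀ x, r x x) (htrans : Transitive r)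
    (hA'0 : ∀ x : ℕ → X, (∀ n, r (x (n + 1)) (x n)) →
      ∃ v, Filter.Tendsto x Filter.atTop (nhds v) ∧ ∀ n, r v (x n)) :
    ∀ x : X, ∃ xbar, r xbar x ∧ ∀ x', r x' xbar → x' = xbar := by
  classical
  intro x
  set S : X → Set ℝ := fun y => (fun z => min (dist z y) 1) '' {z | r z y} with hS
  have hmem : ∀ y, (0:ℝ) ∈ S y := fun y => ⟨y, hrefl y, by simp⟩
  have hbdd : ∀ y, BddAbove (S y) := fun y =>
    ⟨1, by rintro _ ⟨z, hz, rfl⟩; exact min_le_right _ _⟩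
  set ρ : X → ℝ := fun y => sSup (S y) with hρ
  have hρ0 : ∀ y, 0 ≤ ρ y := fun y => le_csSup (hbdd y) (hmem y)
  have hρle : ∀ y z, r z y → min (dist z y) 1 ≤ ρ y := fun y z h =>
    le_csSup (hbdd y) ⟨z, h, rfl⟩
  have hstep : ∀ y, ∃ z, r z y ∧ ρ y / 2 ≤ min (dist z y) 1 := by
    intro y
    rcases eq_or_lt_of_le (hρ0 y) with h | h
    · exact ⟨y, hrefl y, by simp [← h]⟩
    · obtain ⟨a, ha, hlt⟩ := exists_lt_of_lt_csSup ⟨0, hmem y⟩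
        (by linarith : ρ y / 2 < ρ y)
      obtain ⟨z, hz, rfl⟩ := ha
      exact ⟨z, hz, hlt.le⟩
  choose f hf1 hf2 using hstep
  set u : ℕ → X := fun n => f^[n] x with hu'
  have hu : ∀ n, u (n+1) = f (u n) := fun n => Function.iterate_succ_apply' f n x
  have hdec : ∀ n, r (u (n+1)) (u n) := fun n => by rw [hu]; exact hf1 _
  obtain ⟨v, hv, hvr⟩ := hA'0 u hdec
  refine ⟨v, by simpa [hu'] using hvr 0, ?_⟩
  intro x' hx'
  have hx'n : ∀ n, r x' (u n) := fun n => htrans hx' (hvr n)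
  have key : ∀ ε : ℝ, 0 < ε → ε < 1 → dist x' v ≤ ε := by
    intro ε hε hε1
    rw [Metric.tendsto_atTop] at hv
    obtain ⟨N, hN⟩ := hv (ε / 8) (by linarith)
    have h1 : dist (u (N+1)) (u N) < ε / 4 := by
      have a := hN (N+1) (by omega)
      have b := hN N le_rfl
      have := dist_triangle (u (N+1)) v (u N)
      rw [dist_comm v (u N)] at this
      linarith
    have h2 : ρ (u N) < ε / 2 := by
      have := hf2 (u N)
      have h3 : min (dist (f (u N)) (u N)) 1 ≤ dist (f (u N)) (u N) := min_le_left _ _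
      rw [← hu] at h3 this
      linarith
    have h4 : min (dist x' (u N)) 1 ≤ ρ (u N) := hρle _ _ (hx'n N)
    have h5 : dist x' (u N) < ε / 2 := by
      rcases le_or_gt (dist x' (u N)) 1 with h | h
      · rw [min_eq_left h] at h4; linarith
      · rw [min_eq_right h.le] at h4; linarith
    have h6 := hN N le_rfl
    have := dist_triangle x' (u N) v
    linarith
  have : dist x' v = 0 := by
    by_contra h
    have hpos : 0 < dist x' v := lt_of_le_of_ne dist_nonneg (Ne.symm h)
    have := key (min (dist x' v / 2) (1/2)) (by positivity)
      (lt_of_le_of_lt (min_le_right _ _) (by norm_num))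
    have := min_le_left (dist x' v / 2) (1/2)
    linarith [le_trans (key _ (by positivity : (0:ℝ) < min (dist x' v / 2) (1/2))
      (lt_of_le_of_lt (min_le_right _ _) (by norm_num))) (min_le_left (dist x' v / 2) (1/2))]
  exact dist_eq_zero.mp this
end

section
/- Let (X,d) be a metric space, Z a nonempty set, and 𝒜 ⊆ X × Z a nonempty set preordered by a reflexive transitive relation ≼. Then the following are equivalent: (a) for every ≼-decreasing sequence ((x_n,z_n))_{n≥1} ⊆ 𝒜 the sequence (x_n) is Cauchy; (b) for every ≼-decreasing sequence ((x_n,z_n))_{n≥1} ⊆ 𝒜 the sequence (x_n) is asymptotic, that is, d(x_n,x_{n+1}) → 0. -/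
/-- Condition (Ca) holds iff every decreasing sequence has asymptotic first
components. -/
theorem statement10 {X Z : Type*} [MetricSpace X] [Nonempty Z]
    (A : Set (X × Z)) (hA : A.Nonempty)
    (r : X × Z → X × Z → Prop)
    (hrefl : ∀ p ∈ A, r p p)
    (htrans : ∀ p ∈ A, ∀ q ∈ A, ∀ s ∈ A, r p q → r q s → r p s) :
    (∀ u : ℕ → X × Z, (∀ n, u n ∈ A) → (∀ n, r (u (n + 1)) (u n)) →
        CauchySeq (fun n => (u n).1)) ↔
      (∀ u : ℕ → X × Z, (∀ n, u n ∈ A) → (∀ n, r (u (n + 1)) (u n)) →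
        Filter.Tendsto (fun n => dist (u n).1 (u (n + 1)).1) Filter.atTop (nhds 0)) := by
  constructor
  · intro h u hu hr
    have hc := h u hu hr
    rw [Metric.cauchySeq_iff] at hc
    rw [Metric.tendsto_atTop]
    intro ε hε
    obtain ⟨N, hN⟩ := hc ε hε
    refine ⟨N, fun n hn => ?_⟩
    have := hN n hn (n + 1) (by omega)
    simpa [Real.dist_eq, abs_of_nonneg dist_nonneg] using this
  · intro h u hu hr
    by_contra hcauchy
    rw [Metric.cauchySeq_iff] at hcauchy
    push_neg at hcauchy
    obtain ⟨ε, hε, H⟩ := hcauchy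
    -- chain: for m ≤ n, r (u n) (u m)
    have key : ∀ m k : ℕ, r (u (m + k)) (u m) := by
      intro m k
      induction k with
      | zero => exact hrefl (u m) (hu m)
      | succ k ih =>
        exact htrans (u (m + k + 1)) (hu _) (u (m + k)) (hu _) (u m) (hu _) (hr (m + k)) ih
    have key' : ∀ m n : ℕ, m ≤ n → r (u n) (u m) := by
      intro m n hmn
      obtain ⟨k, rfl⟩ := Nat.exists_eq_add_of_le hmn
      exact key m k
    -- pairs with large distance
    have H' : ∀ N : ℕ, ∃ p q : ℕ, N ≤ p ∧ p < q ∧ ε ≤ dist (u p).1 (u q).1 := by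
      intro N
      obtain ⟨m, hm, n, hn, hd⟩ := H N
      rcases lt_trichotomy m n with hlt | heq | hgt
      · exact ⟨m, n, hm, hlt, hd⟩
      · subst heq; simp at hd; linarith
      · exact ⟨n, m, hn, hgt, by rwa [dist_comm]⟩
    choose p q hp hpq hd using H'
    -- iterate
    set c : ℕ → ℕ := fun k => Nat.rec 0 (fun _ ck => q ck + 1) k with hc
    have hcsucc : ∀ k, c (k + 1) = q (c k) + 1 := fun k => rfl
    set b : ℕ → ℕ := fun k => if k % 2 = 0 then p (c (k / 2)) else q (c (k / 2)) with hb
    have hbeven : ∀ m, b (2 * m) = p (c m) := by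
      intro m; simp [hb, Nat.mul_mod_right, Nat.mul_div_cancel_left _ (by norm_num : 0 < 2)]
    have hbodd : ∀ m, b (2 * m + 1) = q (c m) := by
      intro m
      have h1 : (2 * m + 1) % 2 = 1 := by omega
      have h2 : (2 * m + 1) / 2 = m := by omega
      simp [hb, h1, h2]
    have hbmono : ∀ k, b k < b (k + 1) := by
      intro k
      rcases Nat.even_or_odd k with ⟨m, hm⟩ | ⟨m, hm⟩
      · subst hm
        rw [show m + m = 2 * m by ring, hbeven, hbodd]
        exact hpq (c m)
      · subst hm
        rw [show 2 * m + 1 + 1 = 2 * (m + 1) by ring, hbodd, hbeven, hcsucc]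
        exact lt_of_lt_of_le (Nat.lt_succ_self _) (hp _)
    set v : ℕ → X × Z := fun k => u (b k) with hv
    have hvA : ∀ n, v n ∈ A := fun n => hu _
    have hvr : ∀ n, r (v (n + 1)) (v n) := fun n => key' _ _ (le_of_lt (hbmono n))
    have := h v hvA hvr
    rw [Metric.tendsto_atTop] at this
    obtain ⟨N, hN⟩ := this ε hε
    have h2N := hN (2 * N) (by omega)
    rw [Real.dist_eq] at h2N
    have hloc : dist (v (2 * N)).1 (v (2 * N + 1)).1 = dist (u (p (c N))).1 (u (q (c N))).1 := by
      rw [hv]; simp only [hbeven, hbodd]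
    have := hd (c N)
    rw [sub_zero, abs_of_nonneg dist_nonneg, hloc] at h2N
    linarith
end

section
/- Let (Z,≼) be a preordered set and φ : Z → ℝ ∪ {±∞} a ≼-increasing function. For A₁, A₂ ⊆ Z define A₁ ≼ˡ A₂ iff for every z₂ ∈ A₂ there exists z₁ ∈ A₁ with z₁ ≼ z₂, and define A₁ ≼ˡ_φ A₂ iff [A₁ = A₂, or (A₁ ≼ˡ A₂ and inf φ(A₁) < inf φ(A₂))]. Then ≼ˡ_φ is a partial order on the power set of Z. Furthermore, if 𝒜 is a nonempty collection of subsets of Z such that every ≼ˡ-decreasing sequence in 𝒜 has a minorant in 𝒜 with respect to ≼ˡ, then for every A ∈ 𝒜 there exists Ā ∈ 𝒜 minimal with respect to ≼ˡ_φ such that Ā ≼ˡ_φ A; moreover, every A' ∈ 𝒜 with A' ≼ˡ Ā satisfies inf φ(A') = inf φ(Ā). -/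
noncomputable def eemb : EReal → ℝ := fun x => if x = ⊥ then -2 else if x = ⊤ then 2 else Real.arctan x.toReal

lemma eemb_bot : eemb ⊥ = -2 := by simp [eemb]
lemma eemb_top : eemb ⊤ = 2 := by simp [eemb]
lemma eemb_coe (x : ℝ) : eemb x = Real.arctan x := by simp [eemb]

lemma eemb_strictMono : StrictMono eemb := by
  have hpi : Real.pi < 4 := by linarith [Real.pi_lt_d2]
  intro a b hab
  induction a using EReal.rec with
  | bot =>
    induction b using EReal.rec with
    | bot => exact absurd hab (lt_irrefl _)
    | coe x =>
      rw [eemb_bot, eemb_coe]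
      have := Real.neg_pi_div_two_lt_arctan x; linarith
    | top => rw [eemb_bot, eemb_top]; norm_num
  | coe x =>
    induction b using EReal.rec with
    | bot => exact absurd hab (by simp)
    | coe y =>
      rw [eemb_coe, eemb_coe]
      exact Real.arctan_strictMono (by exact_mod_cast hab)
    | top =>
      rw [eemb_coe, eemb_top]
      have := Real.arctan_lt_pi_div_two x; linarith
  | top => exact absurd hab (by simp)

lemma eemb_lb (x : EReal) : -2 ≤ eemb x := by
  have hpi : Real.pi < 4 := by linarith [Real.pi_lt_d2]
  induction x using EReal.rec with
  | bot => rw [eemb_bot]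
  | coe x => rw [eemb_coe]; have := Real.neg_pi_div_two_lt_arctan x; linarith
  | top => rw [eemb_top]; norm_num

/-- Minimal element theorem for the set relation `≼ˡ` and its scalarized
partial order `≼ˡ_φ` on the power set of a preordered set `Z`.
`sInf` on `EReal` satisfies `sInf ∅ = +∞`, matching the convention. -/
theorem statement12 {Z : Type*} (r : Z → Z → Prop)
    (hrefl : ∀ z, r z z) (htrans : Transitive r)
    (φ : Z → EReal) (hmono : ∀ a b, r a b → φ a ≤ φ b)
    (rl : Set Z → Set Z → Prop)
    (hrl : ∀ A B : Set Z, rl A B ↔ ∀ z₂ ∈ B, ∃ z₁ ∈ A, r z₁ z₂)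
    (rlφ : Set Z → Set Z → Prop)
    (hrlφ : ∀ A B : Set Z,
      rlφ A B ↔ (A = B ∨ (rl A B ∧ sInf (φ '' A) < sInf (φ '' B)))) :
    -- ≼ˡ_φ is a partial order on 2^Z
    ((∀ A, rlφ A A) ∧ Transitive rlφ ∧ AntiSymmetric rlφ)
    ∧
    -- minimal element property within a family 𝒜 satisfying (Ab) wrt ≼ˡ
    (∀ 𝒜 : Set (Set Z), 𝒜.Nonempty →
      (∀ u : ℕ → Set Z, (∀ n, u n ∈ 𝒜) → (∀ n, rl (u (n + 1)) (u n)) →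
        ∃ B ∈ 𝒜, ∀ n, rl B (u n)) →
      ∀ A ∈ 𝒜, ∃ Abar ∈ 𝒜, rlφ Abar A ∧
        (∀ A' ∈ 𝒜, rlφ A' Abar → A' = Abar) ∧
        (∀ A' ∈ 𝒜, rl A' Abar → sInf (φ '' A') = sInf (φ '' Abar))) := by
  -- basic facts about rl
  have rl_refl : ∀ A : Set Z, rl A A := fun A =>
    (hrl A A).2 fun z hz => ⟨z, hz, hrefl z⟩
  have rl_trans : ∀ {A B C : Set Z}, rl A B → rl B C → rl A C := by
    intro A B C hAB hBC
    rw [hrl] at *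
    intro z hz
    obtain ⟨z₂, hz₂, hr₂⟩ := hBC z hz
    obtain ⟨z₁, hz₁, hr₁⟩ := hAB z₂ hz₂
    exact ⟨z₁, hz₁, htrans hr₁ hr₂⟩
  have mono : ∀ {A B : Set Z}, rl A B → sInf (φ '' A) ≤ sInf (φ '' B) := by
    intro A B hAB
    apply le_sInf
    rintro b ⟨z, hz, rfl⟩
    obtain ⟨z₁, hz₁, hr⟩ := (hrl A B).1 hAB z hz
    exact le_trans (sInf_le ⟨z₁, hz₁, rfl⟩) (hmono _ _ hr)
  constructor
  · refine ⟨fun A => (hrlφ A A).2 (Or.inl rfl), ?_, ?_⟩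
    · intro A B C hAB hBC
      rw [hrlφ] at *
      rcases hAB with rfl | ⟨h1, h2⟩
      · exact hBC
      rcases hBC with rfl | ⟨h3, h4⟩
      · exact Or.inr ⟨h1, h2⟩
      · exact Or.inr ⟨rl_trans h1 h3, lt_trans h2 h4⟩
    · intro A B hAB hBA
      rw [hrlφ] at hAB hBA
      rcases hAB with rfl | ⟨h1, h2⟩
      · rfl
      rcases hBA with rfl | ⟨h3, h4⟩
      · rfl
      · exact absurd (lt_trans h2 h4) (lt_irrefl _)
  · intro 𝒜 h𝒜 hAb A hA
    set ψ : Set Z → ℝ := fun X => eemb (sInf (φ '' X)) with hψ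
    -- key construction
    have key : ∀ C ∈ 𝒜, ∃ B ∈ 𝒜, rl B C ∧
        ∀ A' ∈ 𝒜, rl A' B → sInf (φ '' A') = sInf (φ '' B) := by
      intro C hC
      have step : ∀ (n : ℕ) (X : Set Z), X ∈ 𝒜 → ∃ Y, Y ∈ 𝒜 ∧ rl Y X ∧
          ψ Y < sInf {t | ∃ W, (W ∈ 𝒜 ∧ rl W X) ∧ ψ W = t} + (1/2 : ℝ)^n := by
        intro n X hX
        set T := {t | ∃ W, (W ∈ 𝒜 ∧ rl W X) ∧ ψ W = t} with hT
        have hTne : T.Nonempty := ⟨ψ X, X, ⟨hX, rl_refl X⟩, rfl⟩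
        have hlt : sInf T < sInf T + (1/2 : ℝ)^n := by
          have : (0:ℝ) < (1/2)^n := by positivity
          linarith
        obtain ⟨t, ht, htlt⟩ := exists_lt_of_csInf_lt hTne hlt
        obtain ⟨W, ⟨hW𝒜, hWrl⟩, rfl⟩ := ht
        exact ⟨W, hW𝒜, hWrl, htlt⟩
      choose nxt h1 h2 h3 using step
      let v : ℕ → {X : Set Z // X ∈ 𝒜} := fun n =>
        Nat.rec ⟨C, hC⟩ (fun n p => ⟨nxt n p.1 p.2, h1 n p.1 p.2⟩) n
      set u : ℕ → Set Z := fun n => (v n).1 with hu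
      have humem : ∀ n, u n ∈ 𝒜 := fun n => (v n).2
      have hustep : ∀ n, u (n+1) = nxt n (u n) (humem n) := fun n => rfl
      have hudec : ∀ n, rl (u (n+1)) (u n) := by
        intro n; rw [hustep]; exact h2 n (u n) (humem n)
      obtain ⟨B, hB𝒜, hBrl⟩ := hAb u humem hudec
      refine ⟨B, hB𝒜, hBrl 0, ?_⟩
      intro A' hA' hA'B
      have hle : sInf (φ '' A') ≤ sInf (φ '' B) := mono hA'B
      refine le_antisymm hle ?_
      have hpsile : ψ B ≤ ψ A' := by
        by_contra hcon
        push_neg at hcon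
        obtain ⟨n, hn⟩ := exists_pow_lt_of_lt_one (by linarith : (0:ℝ) < ψ B - ψ A')
          (by norm_num : (1/2 : ℝ) < 1)
        -- at stage n:
        set T := {t | ∃ W, (W ∈ 𝒜 ∧ rl W (u n)) ∧ ψ W = t} with hT
        have hbdd : BddBelow T := ⟨-2, by rintro t ⟨W, _, rfl⟩; exact eemb_lb _⟩
        have hA'T : ψ A' ∈ T := ⟨A', ⟨hA', rl_trans hA'B (hBrl n)⟩, rfl⟩
        have h4 : sInf T ≤ ψ A' := csInf_le hbdd hA'T
        have h5 : ψ (u (n+1)) < sInf T + (1/2:ℝ)^n := by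
          rw [hustep]; exact h3 n (u n) (humem n)
        have h6 : ψ B ≤ ψ (u (n+1)) :=
          eemb_strictMono.monotone (mono (hBrl (n+1)))
        linarith
      exact eemb_strictMono.le_iff_le.1 hpsile
    by_cases hgood : ∀ A' ∈ 𝒜, rl A' A → sInf (φ '' A') = sInf (φ '' A)
    · refine ⟨A, hA, (hrlφ A A).2 (Or.inl rfl), ?_, hgood⟩
      intro A' hA' hrlA'
      rcases (hrlφ A' A).1 hrlA' with rfl | ⟨h1, h2⟩
      · rfl
      · exact absurd (hgood A' hA' h1) (ne_of_lt h2)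
    · push_neg at hgood
      obtain ⟨A'', hA''𝒜, hA''rl, hA''ne⟩ := hgood
      have hA''lt : sInf (φ '' A'') < sInf (φ '' A) := lt_of_le_of_ne (mono hA''rl) hA''ne
      obtain ⟨B, hB𝒜, hBrl, hBmin⟩ := key A'' hA''𝒜
      refine ⟨B, hB𝒜, ?_, ?_, hBmin⟩
      · exact (hrlφ B A).2 (Or.inr ⟨rl_trans hBrl hA''rl, lt_of_le_of_lt (mono hBrl) hA''lt⟩)
      · intro A' hA' hrlA'
        rcases (hrlφ A' B).1 hrlA' with rfl | ⟨h1, h2⟩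
        · rfl
        · exact absurd (hBmin A' hA' h1) (ne_of_lt h2)
end

section
/- Let Y be a topological additive group. If S, T ⊆ Y are nonempty and S is sequentially compact, then the sequential closure of S + T equals S + (sequential closure of T). In particular, if Y is a real topological vector space, K ⊆ Y is a convex cone, and H ⊆ K is nonempty and sequentially compact, then 0 ∉ seq-cl(H + K) if and only if H ∩ (−seq-cl K) = ∅. -/
open scoped Pointwise

/-- In a Hausdorff topological additive group, the sequential closure of `S + T`
with `S` sequentially compact equals `S + seqClosure T`; in particular, for a
real topological vector space with a convex cone `K` and a nonempty
sequentially compact `H ⊆ K`, `0 ∉ seqClosure (H + K) ↔ H ∩ (-seqClosure K) = ∅`. -/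
theorem statement13 {Y : Type*} [TopologicalSpace Y] [AddCommGroup Y]
    [IsTopologicalAddGroup Y] [T2Space Y] :
    (∀ S T : Set Y, S.Nonempty → T.Nonempty → IsSeqCompact S →
      seqClosure (S + T) = S + seqClosure T)
    ∧
    (∀ [Module ℝ Y] [ContinuousSMul ℝ Y], ∀ K H : Set Y,
      K + K ⊆ K → (∀ t : ℝ, 0 < t → t • K ⊆ K) →
      H ⊆ K → H.Nonempty → IsSeqCompact H →
      ((0 : Y) ∉ seqClosure (H + K) ↔ H ∩ (-seqClosure K) = ∅)) := by
  have main : ∀ S T : Set Y, S.Nonempty → T.Nonempty → IsSeqCompact S →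
      seqClosure (S + T) = S + seqClosure T := by
    intro S T hS hT hSc
    apply Set.Subset.antisymm
    · intro y hy
      obtain ⟨u, hu, hlim⟩ := hy
      choose s hs t ht hst using fun n => Set.mem_add.mp (hu n)
      obtain ⟨a, haS, φ, hφ, hlims⟩ := hSc hs
      refine Set.mem_add.mpr ⟨a, haS, y - a, ⟨fun n => t (φ n), fun n => ht _, ?_⟩, by abel⟩
      have heq : (fun n => t (φ n)) = fun n => u (φ n) - s (φ n) := by
        funext n; rw [← hst (φ n)]; abel
      rw [heq]
      exact (hlim.comp hφ.tendsto_atTop).sub hlims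
    · rintro y ⟨a, ha, b, ⟨u, hu, hlim⟩, rfl⟩
      exact ⟨fun n => a + u n, fun n => Set.add_mem_add ha (hu n),
        tendsto_const_nhds.add hlim⟩
  refine ⟨main, ?_⟩
  intro _ _ K H _ _ hHK hH hHc
  have hK : K.Nonempty := hH.mono hHK
  rw [main H K hH hK hHc]
  constructor
  · intro h
    ext x
    simp only [Set.mem_inter_iff, Set.mem_neg, Set.mem_empty_iff_false, iff_false, not_and]
    intro hxH hxK
    exact h (Set.mem_add.mpr ⟨x, hxH, -x, hxK, by abel⟩)
  · rintro h ⟨a, haH, b, hbK, hab⟩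
    have : a ∈ H ∩ (-seqClosure K) := by
      refine ⟨haH, Set.mem_neg.mpr ?_⟩
      rwa [neg_eq_of_add_eq_zero_right hab]
    rw [h] at this
    exact this
end

section
/- Let Y be a real separated topological vector space, and let C ⊆ Y be a proper convex cone and K ⊆ Y a convex cone with K ⊆ C. If H ⊆ Y is a nonempty sequentially compact set with H ⊆ interior(C), then 0 does not belong to the sequential closure of H + K. -/
open scoped Pointwise

open Filter Topology

/-- If `C` is a proper convex cone, `K ⊆ C` a convex cone, and `H` a nonempty
sequentially compact set contained in the interior of `C`, then
`0 ∉ seqClosure (H + K)`. -/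
theorem statement15 {Y : Type*} [AddCommGroup Y] [Module ℝ Y]
    [TopologicalSpace Y] [IsTopologicalAddGroup Y] [ContinuousSMul ℝ Y] [T2Space Y]
    (C : Set Y) (hCproper : C ≠ Set.univ)
    (hC1 : C + C ⊆ C) (hC2 : ∀ t : ℝ, 0 < t → t • C ⊆ C)
    (K : Set Y) (hK1 : K + K ⊆ K) (hK2 : ∀ t : ℝ, 0 < t → t • K ⊆ K)
    (hKC : K ⊆ C)
    (H : Set Y) (hH : H.Nonempty) (hHcpt : IsSeqCompact H)
    (hHC : H ⊆ interior C) :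
    (0 : Y) ∉ seqClosure (H + K) := by
  intro h0
  obtain ⟨x, hx, hxlim⟩ := h0
  choose a ha b hb hab using fun n => Set.mem_add.mp (hx n)
  obtain ⟨h, hhH, φ, hφ, halim⟩ := hHcpt ha
  -- c n := h + b (φ n) tends to 0
  have hblim : Tendsto (fun n => b (φ n)) atTop (𝓝 (-h)) := by
    have h1 : Tendsto (fun n => x (φ n) - a (φ n)) atTop (𝓝 (0 - h)) :=
      (hxlim.comp hφ.tendsto_atTop).sub halim
    have heq : (fun n => b (φ n)) = fun n => x (φ n) - a (φ n) := by
      funext n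
      rw [← hab (φ n)]
      abel
    rw [heq]
    simpa using h1
  have hclim : Tendsto (fun n => -(h + b (φ n))) atTop (𝓝 0) := by
    have := (hblim.const_add h).neg
    simpa using this
  -- C is all of Y
  apply hCproper
  ext y
  simp only [Set.mem_univ, iff_true]
  -- h ∈ interior C
  have hC_nhds : C ∈ 𝓝 h := mem_interior_iff_mem_nhds.mp (hHC hhH)
  have hV : (fun v => h + v) ⁻¹' C ∈ 𝓝 (0 : Y) := by
    have hcont : Continuous fun v : Y => h + v := continuous_const.add continuous_id
    have := hcont.continuousAt (x := (0 : Y))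
    apply this
    simpa using hC_nhds
  obtain ⟨W, hW, hWV⟩ := exists_nhds_zero_half hV
  -- pick t > 0 with t • y ∈ W
  have hty : Tendsto (fun t : ℝ => t • y) (𝓝[>] 0) (𝓝 (0 : Y)) := by
    have : Tendsto (fun t : ℝ => t • y) (𝓝 0) (𝓝 ((0:ℝ) • y)) :=
      (continuous_id.smul continuous_const).tendsto 0
    simpa using this.mono_left nhdsWithin_le_nhds
  obtain ⟨t, htW, ht⟩ := ((hty.eventually hW).and self_mem_nhdsWithin).exists
  obtain ⟨n, hn⟩ := (hclim.eventually hW).exists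
  have hkC : b (φ n) ∈ C := hKC (hb (φ n))
  have h1 : h + (t • y + -(h + b (φ n))) ∈ C := hWV _ htW _ hn
  have h2 : t • y ∈ C := by
    have := hC1 (Set.add_mem_add h1 hkC)
    have heq : h + (t • y + -(h + b (φ n))) + b (φ n) = t • y := by abel
    rwa [heq] at this
  have h3 : y ∈ C := by
    have := hC2 t⁻¹ (by positivity) (Set.smul_mem_smul_set h2)
    rwa [smul_smul, inv_mul_cancel₀ (ne_of_gt ht), one_smul] at this
  exact h3
end

section
/- Let Y be a real separated topological vector space (with the uniformity induced by its additive group structure) and let E ⊆ Y be a nonempty sequentially compact convex set. Then E is cs-complete: for all sequences (λ_n)_{n≥1} ⊆ [0,∞) with ∑_{n≥1} λ_n = 1 and (y_n)_{n≥1} ⊆ E such that the sequence of partial sums (∑_{m=1}^{n} λ_m y_m)_{n≥1} is Cauchy, the series ∑_{n≥1} λ_n y_n converges and its sum belongs to E. -/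
/-- A nonempty sequentially compact convex subset of a real separated
topological vector space (with the uniformity of its additive group) is
cs-complete. -/
theorem statement16 {Y : Type*} [AddCommGroup Y] [Module ℝ Y]
    [UniformSpace Y] [IsUniformAddGroup Y] [ContinuousSMul ℝ Y] [T2Space Y]
    (E : Set Y) (hE : E.Nonempty) (hEcpt : IsSeqCompact E) (hEconv : Convex ℝ E) :
    ∀ (l : ℕ → ℝ) (y : ℕ → Y), (∀ n, 0 ≤ l n) → (∀ n, y n ∈ E) →
      Filter.Tendsto (fun n => ∑ m ∈ Finset.range n, l m) Filter.atTop (nhds 1) →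
      CauchySeq (fun n => ∑ m ∈ Finset.range n, l m • y m) →
      ∃ s ∈ E, Filter.Tendsto (fun n => ∑ m ∈ Finset.range n, l m • y m)
        Filter.atTop (nhds s) := by
  intro l y hl hy hsum hcauchy
  obtain ⟨e₀, he₀⟩ := hE
  set Λ : ℕ → ℝ := fun n => ∑ m ∈ Finset.range n, l m with hΛ
  set S : ℕ → Y := fun n => ∑ m ∈ Finset.range n, l m • y m with hS
  -- the normalized points
  set z : ℕ → Y := fun n => if 0 < Λ n then (Finset.range n).centerMass l y else e₀
    with hz
  have hzE : ∀ n, z n ∈ E := by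
    intro n
    simp only [hz]
    split_ifs with h
    · exact hEconv.centerMass_mem (fun i _ => hl i) h (fun i _ => hy i)
    · exact he₀
  obtain ⟨s, hsE, φ, hφ, hlim⟩ := hEcpt hzE
  refine ⟨s, hsE, ?_⟩
  -- eventually Λ n > 0 and S n = Λ n • z n
  have hΛpos : ∀ᶠ n in Filter.atTop, 0 < Λ n := by
    filter_upwards [hsum.eventually (eventually_gt_nhds (by norm_num : (0:ℝ) < 1))] with n hn
    exact hn
  have hSz : ∀ᶠ n in Filter.atTop, S n = Λ n • z n := by
    filter_upwards [hΛpos] with n hn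
    simp only [hz, if_pos hn, Finset.centerMass, smul_smul, mul_inv_cancel₀ hn.ne', one_smul]
    rw [show (Λ n * (∑ i ∈ Finset.range n, l i)⁻¹) = 1 from mul_inv_cancel₀ hn.ne', one_smul]
  -- S ∘ φ tends to s
  have hφtop : Filter.Tendsto φ Filter.atTop Filter.atTop := hφ.tendsto_atTop
  have h1 : Filter.Tendsto (fun k => Λ (φ k) • z (φ k)) Filter.atTop (nhds ((1:ℝ) • s)) :=
    Filter.Tendsto.smul (hsum.comp hφtop) hlim
  rw [one_smul] at h1
  have h2 : Filter.Tendsto (fun k => S (φ k)) Filter.atTop (nhds s) := by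
    refine h1.congr' ?_
    filter_upwards [hφtop.eventually hSz] with k hk
    exact hk.symm
  exact tendsto_nhds_of_cauchySeq_of_subseq hcauchy hφtop h2
end

section
/- Let (X,d) be a metric space, Y a real vector space, K ⊆ Y a convex cone containing 0, and H ⊆ K a nonempty set such that H + K is convex. Let ((x_n,A_n))_{n≥1} ⊆ X × 2^Y be a ≼_H-decreasing sequence (i.e. A_n ⊆ A_{n+1} + d(x_n,x_{n+1})·H + K for all n ≥ 1) with A_1 ≠ ∅. If there exist α > 0 and an infinite set P ⊆ ℕ\{0} such that A_1 ⊄ A_n + α·H + K for all n ∈ P, then ∑_{n≥1} d(x_n,x_{n+1}) ≤ α; in particular, (x_n)_{n≥1} is a Cauchy sequence. -/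
open scoped Pointwise

section Aux

variable {Y : Type*} [AddCommGroup Y] [Module ℝ Y]

/-- Combination lemma: for `s, t ≥ 0` and `h₁, h₂ ∈ H`,
`s•h₁ + t•h₂ ∈ (s+t)•H + K`. -/
lemma aux_comb (K : Set Y) (hK0 : (0 : Y) ∈ K)
    (hK2 : ∀ t : ℝ, 0 < t → t • K ⊆ K)
    (H : Set Y) (hHKconv : Convex ℝ (H + K))
    {s t : ℝ} (hs : 0 ≤ s) (ht : 0 ≤ t) {h₁ h₂ : Y} (hh₁ : h₁ ∈ H) (hh₂ : h₂ ∈ H) :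
    s • h₁ + t • h₂ ∈ (s + t) • H + K := by
  rcases eq_or_lt_of_le (add_nonneg hs ht) with hst | hst
  · have hs0 : s = 0 := by linarith
    have ht0 : t = 0 := by linarith
    subst hs0; subst ht0
    exact ⟨(0 + 0 : ℝ) • h₁, Set.smul_mem_smul_set hh₁, 0, hK0, by simp⟩
  · have h₁' : h₁ ∈ H + K := ⟨h₁, hh₁, 0, hK0, by simp⟩
    have h₂' : h₂ ∈ H + K := ⟨h₂, hh₂, 0, hK0, by simp⟩
    have hz : (s / (s + t)) • h₁ + (t / (s + t)) • h₂ ∈ H + K := by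
      apply hHKconv h₁' h₂' (div_nonneg hs hst.le) (div_nonneg ht hst.le)
      field_simp
    obtain ⟨h, hh, k, hk, hz⟩ := hz
    have key : s • h₁ + t • h₂ = (s + t) • h + (s + t) • k := by
      have := congrArg (fun y => (s + t) • y) hz
      simp only [smul_add, smul_smul] at this
      rw [mul_div_cancel₀ _ (ne_of_gt hst), mul_div_cancel₀ _ (ne_of_gt hst)] at this
      exact this.symm
    exact key ▸ ⟨(s + t) • h, ⟨h, hh, rfl⟩, (s + t) • k, hK2 _ hst ⟨k, hk, rfl⟩, rfl⟩

end Aux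

/-- If a `≼_H`-decreasing sequence `((x_n, A_n))` has `A_1 ⊄ A_n + α•H + K` for
infinitely many `n`, then `∑ d(x_n, x_{n+1}) ≤ α`; in particular `(x_n)` is
Cauchy. -/
theorem statement17 {X Y : Type*} [MetricSpace X] [AddCommGroup Y] [Module ℝ Y]
    (K : Set Y) (hK0 : (0 : Y) ∈ K)
    (hK1 : K + K ⊆ K) (hK2 : ∀ t : ℝ, 0 < t → t • K ⊆ K)
    (H : Set Y) (hH : H.Nonempty) (hHK : H ⊆ K) (hHKconv : Convex ℝ (H + K))
    (x : ℕ → X) (A : ℕ → Set Y) (hA1 : (A 0).Nonempty)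
    (hdecr : ∀ n, A n ⊆ A (n + 1) + dist (x n) (x (n + 1)) • H + K)
    (α : ℝ) (hα : 0 < α) (P : Set ℕ) (hP : P.Infinite)
    (hnsub : ∀ n ∈ P, ¬ A 0 ⊆ A n + α • H + K) :
    Summable (fun n => dist (x n) (x (n + 1))) ∧
      (∑' n, dist (x n) (x (n + 1))) ≤ α ∧ CauchySeq x := by
  set d : ℕ → ℝ := fun n => dist (x n) (x (n + 1)) with hd
  set S : ℕ → ℝ := fun n => ∑ i ∈ Finset.range n, d i with hS
  have hdnn : ∀ n, 0 ≤ d n := fun n => dist_nonneg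
  have hSnn : ∀ n, 0 ≤ S n := fun n => Finset.sum_nonneg fun i _ => hdnn i
  obtain ⟨h₀, hh₀⟩ := hH
  -- chain: every a ∈ A 0 can be written b + S n • h + k
  have hchain : ∀ n, ∀ a ∈ A 0, ∃ b ∈ A n, ∃ h ∈ H, ∃ k ∈ K, a = b + S n • h + k := by
    intro n
    induction n with
    | zero =>
      intro a ha
      exact ⟨a, ha, h₀, hh₀, 0, hK0, by simp [hS]⟩
    | succ n ih =>
      intro a ha
      obtain ⟨b, hb, h, hh, k, hk, rfl⟩ := ih a ha
      obtain ⟨u, ⟨c, hc, v, ⟨h', hh', rfl⟩, rfl⟩, k', hk', rfl⟩ := hdecr n hb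
      have hcomb := aux_comb K hK0 hK2 H hHKconv (hSnn n) (hdnn n) hh hh'
      obtain ⟨w, ⟨h'', hh'', rfl⟩, k'', hk'', hw⟩ := hcomb
      refine ⟨c, hc, h'', hh'', k'' + (k' + k), hK1 ⟨k'', hk'', k' + k, hK1 ⟨k', hk', k, hk, rfl⟩, rfl⟩, ?_⟩
      have hS1 : S (n + 1) = S n + d n := Finset.sum_range_succ d n
      rw [hS1, show dist (x n) (x (n + 1)) = d n from rfl]
      linear_combination (norm := module) hw.symm
  -- if S n ≥ α then A 0 ⊆ A n + α • H + K
  have hbig : ∀ n, α ≤ S n → A 0 ⊆ A n + α • H + K := by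
    intro n hn a ha
    obtain ⟨b, hb, h, hh, k, hk, rfl⟩ := hchain n a ha
    have hk' : (S n - α) • h + k ∈ K := by
      rcases eq_or_lt_of_le hn with h' | h'
      · simpa [← h'] using hk
      · exact hK1 ⟨(S n - α) • h, hK2 _ (by linarith) ⟨h, hHK hh, rfl⟩, k, hk, rfl⟩
    refine ⟨b + α • h, ⟨b, hb, α • h, ⟨h, hh, rfl⟩, rfl⟩, (S n - α) • h + k, hk', ?_⟩
    have : S n • h = α • h + (S n - α) • h := by
      rw [← add_smul]; ring_nf
    rw [this]; abel
  -- so partial sums are bounded by α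
  have hbound : ∀ n, S n ≤ α := by
    intro n
    obtain ⟨m, hmP, hnm⟩ := hP.exists_gt n
    have hmono : S n ≤ S m :=
      Finset.sum_le_sum_of_subset_of_nonneg
        (Finset.range_subset_range.mpr hnm.le) (fun i _ _ => hdnn i)
    by_contra hcon
    push_neg at hcon
    exact hnsub m hmP (hbig m (by linarith))
  have hsum : Summable d := summable_of_sum_range_le hdnn hbound
  refine ⟨hsum, ?_, cauchySeq_of_summable_dist hsum⟩
  exact Summable.tsum_le_of_sum_range_le hsum hbound
end

section
/- Let Y be a real vector space, K ⊆ Y a convex cone containing 0, H ⊆ K a nonempty set, and E ⊆ Y nonempty. Set Ẽ := E ∩ (−⋃_{t>0}(tH + K)). If there exists a linear functional z* : Y → ℝ with z* ≥ 0 on K such that inf z*(Ẽ) > −∞ and inf z*(H) > 0, then there exists ε > 0 such that E ∩ (−εH − K) = ∅. -/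
open scoped Pointwise

/-- If some linear functional `z*`, nonnegative on `K`, is bounded below on
`Ẽ := E ∩ (−⋃_{t>0}(tH + K))` and has `inf z*(H) > 0`, then
`E ∩ (−εH − K) = ∅` for some `ε > 0`. -/
theorem statement18 {Y : Type*} [AddCommGroup Y] [Module ℝ Y]
    (K : Set Y) (hK0 : (0 : Y) ∈ K)
    (hK1 : K + K ⊆ K) (hK2 : ∀ t : ℝ, 0 < t → t • K ⊆ K)
    (H : Set Y) (hH : H.Nonempty) (hHK : H ⊆ K)
    (E : Set Y) (hE : E.Nonempty)
    (zs : Y →ₗ[ℝ] ℝ) (hzs : ∀ y ∈ K, 0 ≤ zs y)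
    (hEt : BddBelow ((fun y => zs y) ''
      (E ∩ (-(⋃ t ∈ Set.Ioi (0 : ℝ), (t • H + K))))))
    (hHpos : 0 < sInf ((fun y => zs y) '' H)) :
    ∃ ε : ℝ, 0 < ε ∧ E ∩ (-(ε • H + K)) = ∅ := by
  obtain ⟨m, hm⟩ := hEt
  set δ := sInf ((fun y => zs y) '' H) with hδ
  have hbddH : BddBelow ((fun y => zs y) '' H) := by
    refine ⟨0, ?_⟩
    rintro x ⟨h, hh, rfl⟩
    exact hzs h (hHK hh)
  set ε : ℝ := max 1 ((|m| + 1) / δ) with hε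
  have hεpos : 0 < ε := lt_of_lt_of_le one_pos (le_max_left _ _)
  have hεδ : |m| + 1 ≤ ε * δ := by
    have := le_max_right 1 ((|m| + 1) / δ)
    calc |m| + 1 = ((|m| + 1) / δ) * δ := by field_simp
    _ ≤ ε * δ := by
        apply mul_le_mul_of_nonneg_right this hHpos.le
  refine ⟨ε, hεpos, ?_⟩
  ext y
  simp only [Set.mem_inter_iff, Set.mem_empty_iff_false, iff_false]
  rintro ⟨hyE, hyN⟩
  rw [Set.mem_neg] at hyN
  obtain ⟨a, ha, k, hk, hak⟩ := hyN
  obtain ⟨h, hhH, rfl⟩ := ha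
  have hak' : ε • h + k = -y := hak
  have hy : y = -(ε • h + k) := by
    rw [hak', neg_neg]
  have hyT : y ∈ E ∩ (-(⋃ t ∈ Set.Ioi (0 : ℝ), (t • H + K))) := by
    refine ⟨hyE, ?_⟩
    rw [Set.mem_neg]
    refine Set.mem_biUnion (Set.mem_Ioi.mpr hεpos) ?_
    exact ⟨ε • h, ⟨h, hhH, rfl⟩, k, hk, hak⟩
  have hmy : m ≤ zs y := hm ⟨y, hyT, rfl⟩
  have hzy : zs y = -(ε * zs h + zs k) := by
    rw [hy]; simp
  have hδh : δ ≤ zs h := csInf_le hbddH ⟨h, hhH, rfl⟩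
  have hk0 : 0 ≤ zs k := hzs k hk
  have h1 : ε * δ ≤ ε * zs h := mul_le_mul_of_nonneg_left hδh hεpos.le
  have habs : -m ≤ |m| := neg_le_abs m
  linarith
end

section
/- Let (X,d) be a metric space, Y a real vector space, K ⊆ Y a proper convex cone containing 0, and H ⊆ K\(−K) a nonempty set such that H + K is convex. Let 𝒜 ⊆ X × 2^Y be nonempty with A ≠ ∅ for every A in the projection of 𝒜 to 2^Y, ordered by the preorder ≼_H given by (x₁,A₁) ≼_H (x₂,A₂) iff A₂ ⊆ A₁ + d(x₁,x₂)·H + K. Assume (𝒜,≼_H) satisfies condition (C1): every ≼_H-decreasing sequence ((x_n,A_n))_{n≥1} ⊆ 𝒜 with (x_n) Cauchy has a minorant in 𝒜 with respect to ≼_H. Suppose (x₀,A₀) ∈ 𝒜 and ε > 0 are such that A₀ ⊄ A + εH + K for every A in the projection of 𝒜 to 2^Y. Then there exists (x̄,Ā) ∈ 𝒜 such that: (x̄,Ā) ≼_H (x₀,A₀); every (x',A') ∈ 𝒜 with (x',A') ≼_H (x̄,Ā) satisfies x' = x̄; and d(x̄,x₀) < ε. -/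
open scoped Pointwise

section aux
variable {Y : Type*} [AddCommGroup Y] [Module ℝ Y] {K H : Set Y}

lemma aux_L1 (hK0 : (0 : Y) ∈ K) (hK2 : ∀ t : ℝ, 0 < t → t • K ⊆ K)
    (hHK : H ⊆ K \ (-K)) {s t : ℝ} (hs : 0 ≤ s) (hst : s ≤ t) :
    t • H ⊆ s • H + K := by
  rintro y ⟨h, hh, rfl⟩
  refine ⟨s • h, ⟨h, hh, rfl⟩, (t - s) • h, ?_, by module⟩
  rcases eq_or_lt_of_le hst with rfl | hlt
  · simpa using hK0
  · exact hK2 _ (by linarith) ⟨h, (hHK hh).1, rfl⟩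

lemma aux_L2 (hK0 : (0 : Y) ∈ K) (hK2 : ∀ t : ℝ, 0 < t → t • K ⊆ K)
    (hHKconv : Convex ℝ (H + K)) {a b : ℝ} (ha : 0 ≤ a) (hb : 0 ≤ b) :
    a • H + b • H ⊆ (a + b) • H + K := by
  rintro y ⟨-, ⟨h₁, hh₁, rfl⟩, -, ⟨h₂, hh₂, rfl⟩, rfl⟩
  rcases eq_or_lt_of_le (by linarith : (0:ℝ) ≤ a + b) with hc | hc
  · have ha0 : a = 0 := by linarith
    have hb0 : b = 0 := by linarith
    refine ⟨(a + b) • h₁, ⟨h₁, hh₁, rfl⟩, 0, hK0, by rw [ha0, hb0]; module⟩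
  · have h₁' : h₁ ∈ H + K := ⟨h₁, hh₁, 0, hK0, add_zero _⟩
    have h₂' : h₂ ∈ H + K := ⟨h₂, hh₂, 0, hK0, add_zero _⟩
    have hconv := hHKconv h₁' h₂' (by positivity : (0:ℝ) ≤ a / (a+b))
      (by positivity : (0:ℝ) ≤ b / (a+b)) (by field_simp)
    obtain ⟨h₃, hh₃, k₃, hk₃, heq⟩ := hconv
    refine ⟨(a + b) • h₃, ⟨h₃, hh₃, rfl⟩, (a + b) • k₃,
      hK2 _ hc ⟨k₃, hk₃, rfl⟩, ?_⟩
    have := congrArg (fun z => (a + b) • z) heq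
    simp only [smul_add, smul_smul] at this
    rw [mul_div_cancel₀ _ (ne_of_gt hc), mul_div_cancel₀ _ (ne_of_gt hc)] at this
    linear_combination (norm := module) this

lemma aux_trans (hK0 : (0 : Y) ∈ K) (hK1 : K + K ⊆ K)
    (hK2 : ∀ t : ℝ, 0 < t → t • K ⊆ K) (hHKconv : Convex ℝ (H + K))
    {a b : ℝ} (ha : 0 ≤ a) (hb : 0 ≤ b) {A B C : Set Y}
    (hAB : B ⊆ A + a • H + K) (hBC : C ⊆ B + b • H + K) :
    C ⊆ A + (a + b) • H + K := by
  intro y hy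
  obtain ⟨-, ⟨z, hz, -, ⟨h₂, hh₂, rfl⟩, rfl⟩, k₂, hk₂, rfl⟩ := hBC hy
  obtain ⟨-, ⟨w, hw, -, ⟨h₁, hh₁, rfl⟩, rfl⟩, k₁, hk₁, rfl⟩ := hAB hz
  have : a • h₁ + b • h₂ ∈ (a + b) • H + K :=
    aux_L2 hK0 hK2 hHKconv ha hb ⟨a • h₁, ⟨h₁, hh₁, rfl⟩, b • h₂, ⟨h₂, hh₂, rfl⟩, rfl⟩
  obtain ⟨-, ⟨h₃, hh₃, rfl⟩, k₃, hk₃, heq⟩ := this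
  refine ⟨w + (a + b) • h₃, ⟨w, hw, (a+b) • h₃, ⟨h₃, hh₃, rfl⟩, rfl⟩,
    k₃ + (k₁ + k₂), hK1 ⟨k₃, hk₃, k₁ + k₂, hK1 ⟨k₁, hk₁, k₂, hk₂, rfl⟩, rfl⟩, ?_⟩
  linear_combination (norm := module) heq

lemma aux_anti (hK0 : (0 : Y) ∈ K) (hK1 : K + K ⊆ K)
    (hK2 : ∀ t : ℝ, 0 < t → t • K ⊆ K) (hHK : H ⊆ K \ (-K))
    {s t : ℝ} (hs : 0 ≤ s) (hst : s ≤ t) {A B : Set Y}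
    (hAB : B ⊆ A + t • H + K) : B ⊆ A + s • H + K := by
  intro y hy
  obtain ⟨-, ⟨w, hw, z, hz, rfl⟩, k, hk, rfl⟩ := hAB hy
  obtain ⟨-, ⟨h, hh, rfl⟩, k', hk', heq⟩ := aux_L1 hK0 hK2 hHK hs hst hz
  exact ⟨w + s • h, ⟨w, hw, s • h, ⟨h, hh, rfl⟩, rfl⟩, k' + k,
    hK1 ⟨k', hk', k, hk, rfl⟩, by rw [← heq]; ac_rfl⟩

end aux

/-- Ekeland-type minimal element theorem for the set relation `≼_H` on
`X × 2^Y` under condition (C1) and the boundedness condition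
`A₀ ⊄ A + εH + K`. -/
theorem statement19 {X Y : Type*} [MetricSpace X] [AddCommGroup Y] [Module ℝ Y]
    (K : Set Y) (hKproper : K ≠ Set.univ) (hK0 : (0 : Y) ∈ K)
    (hK1 : K + K ⊆ K) (hK2 : ∀ t : ℝ, 0 < t → t • K ⊆ K)
    (H : Set Y) (hH : H.Nonempty) (hHK : H ⊆ K \ (-K)) (hHKconv : Convex ℝ (H + K))
    (relH : X × Set Y → X × Set Y → Prop)
    (hrelH : ∀ p q : X × Set Y, relH p q ↔ q.2 ⊆ p.2 + dist p.1 q.1 • H + K)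
    (𝒜 : Set (X × Set Y)) (h𝒜ne : 𝒜.Nonempty)
    (h𝒜 : ∀ p ∈ 𝒜, p.2.Nonempty)
    (hC1 : ∀ u : ℕ → X × Set Y, (∀ n, u n ∈ 𝒜) → (∀ n, relH (u (n + 1)) (u n)) →
      CauchySeq (fun n => (u n).1) → ∃ p ∈ 𝒜, ∀ n, relH p (u n))
    (x₀ : X) (A₀ : Set Y) (h₀ : (x₀, A₀) ∈ 𝒜)
    (ε : ℝ) (hε : 0 < ε)
    (hbd : ∀ p ∈ 𝒜, ¬ A₀ ⊆ p.2 + ε • H + K) :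
    ∃ p ∈ 𝒜, relH p (x₀, A₀) ∧
      (∀ q ∈ 𝒜, relH q p → q.1 = p.1) ∧ dist p.1 x₀ < ε := by
  obtain ⟨h₁, hh₁⟩ := hH
  -- reflexivity
  have hrefl : ∀ p : X × Set Y, relH p p := by
    intro p
    rw [hrelH]
    intro y hy
    exact ⟨y + dist p.1 p.1 • h₁, ⟨y, hy, _, ⟨h₁, hh₁, rfl⟩, rfl⟩, 0, hK0, by
      simp⟩
  -- transitivity
  have htrans : ∀ p q r : X × Set Y, relH p q → relH q r → relH p r := by
    intro p q r hpq hqr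
    rw [hrelH] at hpq hqr ⊢
    have h1 := aux_trans hK0 hK1 hK2 hHKconv dist_nonneg dist_nonneg hpq hqr
    exact aux_anti hK0 hK1 hK2 hHK dist_nonneg (dist_triangle _ _ _) h1
  -- distance bound
  have dlem : ∀ p ∈ 𝒜, relH p (x₀, A₀) → dist p.1 x₀ < ε := by
    intro p hp hrel
    by_contra hcon
    push_neg at hcon
    rw [hrelH] at hrel
    exact hbd p hp (aux_anti hK0 hK1 hK2 hHK hε.le hcon hrel)
  -- the choice step
  have hstep : ∀ p : {p : X × Set Y // p ∈ 𝒜 ∧ relH p (x₀, A₀)},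
      ∃ q : {p : X × Set Y // p ∈ 𝒜 ∧ relH p (x₀, A₀)}, relH q.1 p.1 ∧
        ∀ q' ∈ 𝒜, relH q' p.1 → dist q'.1 p.1.1 ≤ 2 * dist q.1.1 p.1.1 := by
    rintro ⟨p, hp𝒜, hp₀⟩
    set T : Set ℝ := (fun q' : X × Set Y => dist q'.1 p.1) ''
      {q' | q' ∈ 𝒜 ∧ relH q' p} with hT
    have hTmem : (0 : ℝ) ∈ T := ⟨p, ⟨hp𝒜, hrefl p⟩, dist_self _⟩
    have hTne : T.Nonempty := ⟨0, hTmem⟩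
    have hTbdd : BddAbove T := by
      refine ⟨ε + dist x₀ p.1, ?_⟩
      rintro d ⟨q', ⟨hq'𝒜, hq'rel⟩, rfl⟩
      have := dlem q' hq'𝒜 (htrans q' p (x₀, A₀) hq'rel hp₀)
      calc dist q'.1 p.1 ≤ dist q'.1 x₀ + dist x₀ p.1 := dist_triangle _ _ _
        _ ≤ ε + dist x₀ p.1 := by linarith
    set r := sSup T with hr
    have hrle : ∀ q' ∈ 𝒜, relH q' p → dist q'.1 p.1 ≤ r :=
      fun q' h1 h2 => le_csSup hTbdd ⟨q', ⟨h1, h2⟩, rfl⟩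
    have hr0 : 0 ≤ r := le_csSup hTbdd hTmem
    obtain ⟨q, hq𝒜, hqrel, hqd⟩ :
        ∃ q, q ∈ 𝒜 ∧ relH q p ∧ r / 2 ≤ dist q.1 p.1 := by
      rcases lt_or_ge 0 r with hpos | hneg
      · obtain ⟨d, ⟨q, ⟨hq1, hq2⟩, rfl⟩, hd⟩ :=
          exists_lt_of_lt_csSup hTne (half_lt_self hpos)
        exact ⟨q, hq1, hq2, hd.le⟩
      · exact ⟨p, hp𝒜, hrefl p, by simp [dist_self]; linarith⟩
    exact ⟨⟨q, hq𝒜, htrans q p (x₀, A₀) hqrel hp₀⟩, hqrel,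
      fun q' h1 h2 => le_trans (hrle q' h1 h2) (by linarith)⟩
  choose g hg1 hg2 using hstep
  set v : ℕ → {p : X × Set Y // p ∈ 𝒜 ∧ relH p (x₀, A₀)} :=
    fun n => g^[n] ⟨(x₀, A₀), h₀, hrefl _⟩ with hv
  have hvs : ∀ n, v (n + 1) = g (v n) := fun n =>
    Function.iterate_succ_apply' g n _
  set u : ℕ → X × Set Y := fun n => (v n).1 with hu
  have hu0 : u 0 = (x₀, A₀) := rfl
  have humem : ∀ n, u n ∈ 𝒜 := fun n => (v n).2.1
  have hdec : ∀ n, relH (u (n + 1)) (u n) := by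
    intro n
    have : u (n + 1) = (g (v n)).1 := congrArg Subtype.val (hvs n)
    rw [this]
    exact (hg1 (v n))
  have hbnd : ∀ n, ∀ q' ∈ 𝒜, relH q' (u n) →
      dist q'.1 (u n).1 ≤ 2 * dist (u (n + 1)).1 (u n).1 := by
    intro n q' h1 h2
    have he : u (n + 1) = (g (v n)).1 := congrArg Subtype.val (hvs n)
    rw [he]
    exact hg2 (v n) q' h1 h2
  set d : ℕ → ℝ := fun n => dist (u (n + 1)).1 (u n).1 with hd
  set S : ℕ → ℝ := fun n => ∑ k ∈ Finset.range n, d k with hSdef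
  have hS : ∀ n, A₀ ⊆ (u n).2 + S n • H + K := by
    intro n
    induction n with
    | zero =>
      intro y hy
      exact ⟨y + (S 0) • h₁, ⟨y, hy, _, ⟨h₁, hh₁, rfl⟩, rfl⟩, 0, hK0, by
        simp [hSdef]⟩
    | succ n ih =>
      have hrel := hdec n
      rw [hrelH] at hrel
      have := aux_trans hK0 hK1 hK2 hHKconv dist_nonneg
        (Finset.sum_nonneg fun _ _ => dist_nonneg) hrel ih
      have hSs : S (n + 1) = d n + S n := by
        simp [hSdef, Finset.sum_range_succ, add_comm]
      rw [hSs]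
      exact this
  have hSlt : ∀ n, S n < ε := by
    intro n
    by_contra hcon
    push_neg at hcon
    exact hbd (u n) (humem n) (aux_anti hK0 hK1 hK2 hHK hε.le hcon (hS n))
  have hsum : Summable d :=
    summable_of_sum_range_le (fun n => dist_nonneg) fun n => (hSlt n).le
  have hcauchy : CauchySeq fun n => (u n).1 := by
    apply cauchySeq_of_summable_dist
    simpa [hd, dist_comm] using hsum
  obtain ⟨pb, hpb𝒜, hpbmin⟩ := hC1 u humem hdec hcauchy
  have hd0 : Filter.Tendsto d Filter.atTop (nhds 0) := hsum.tendsto_atTop_zero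
  refine ⟨pb, hpb𝒜, hpbmin 0, ?_, dlem pb hpb𝒜 (hpbmin 0)⟩
  intro q hq hqpb
  have hqn : ∀ n, relH q (u n) := fun n => htrans q pb (u n) hqpb (hpbmin n)
  have hkey : ∀ n, dist q.1 pb.1 ≤ 4 * d n := by
    intro n
    have h1 := hbnd n q hq (hqn n)
    have h2 := hbnd n pb hpb𝒜 (hpbmin n)
    calc dist q.1 pb.1 ≤ dist q.1 (u n).1 + dist (u n).1 pb.1 :=
        dist_triangle _ _ _
      _ ≤ 2 * d n + 2 * d n := by
        rw [dist_comm (u n).1 pb.1]; exact add_le_add h1 h2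
      _ = 4 * d n := by ring
  have hlim : Filter.Tendsto (fun n => 4 * d n) Filter.atTop (nhds 0) := by
    simpa using hd0.const_mul 4
  have : dist q.1 pb.1 ≤ 0 := ge_of_tendsto' hlim hkey
  exact dist_le_zero.mp (le_antisymm this dist_nonneg).le
end
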